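/- arXiv:2105.11637 — 2 statements merged into one kernel-verified Lean document; each statement's English description precedes it below -/
import Mathlib

section
/- For every finite group G and prime p, N^∞_{𝒰_p}(G) equals the intersection of all normal subgroups N of G such that N_{𝒰_p}(G/N) = 1. -/
universe u

/-- A class of groups (a property of groups) in universe `u`. -/
abbrev GroupClass : Type (u + 1) := ∀ (H : Type u) [Group H], Prop

/-- A (finite) normal chain of `G`: a monotone chain of subgroups running from `⊥`
to `⊤`, all of whose terms are normal in `G`. -/
structure NormalChain (G : Type u) [Group G] : Type u where
  len : ℕ
  ser : Fin (len + 1) → Subgroup G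
  mono : Monotone ser
  bot_eq : ser 0 = ⊥
  top_eq : ser (Fin.last len) = ⊤
  normal : ∀ i, (ser i).Normal

namespace NormalChain

variable {G : Type u} [Group G] (S : NormalChain G)

/-- The order of the `i`-th factor `S.ser i.succ / S.ser i.castSucc` of the chain. -/
noncomputable def factorCard (i : Fin S.len) : ℕ :=
  (S.ser i.castSucc).relIndex (S.ser i.succ)

/-- The `i`-th factor of the chain (realized as the image of `S.ser i.succ` in
`G ⧸ S.ser i.castSucc`) satisfies the group property `P`. -/
def FactorProp (P : GroupClass.{u}) (i : Fin S.len) : Prop :=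
  letI := S.normal i.castSucc
  P ↥(Subgroup.map (QuotientGroup.mk' (S.ser i.castSucc)) (S.ser i.succ))

end NormalChain

/-- A finite group is `p`-nilpotent if it has a normal `p`-complement. -/
def IsPNilpotentGrp (p : ℕ) (G : Type u) [Group G] : Prop :=
  ∃ N : Subgroup G, N.Normal ∧ ¬ p ∣ Nat.card N ∧ ∃ k : ℕ, N.index = p ^ k

/-- A group is supersolvable if it has a normal series with cyclic factors. -/
def IsSupersolvableGrp (G : Type u) [Group G] : Prop :=
  ∃ S : NormalChain G, ∀ i, S.FactorProp (fun H inst => letI := inst; IsCyclic H) i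

/-- A group is `p`-solvable if it has a normal series each of whose factors is a
`p`-group or a `p'`-group. -/
def IsPSolvableGrp (p : ℕ) (G : Type u) [Group G] : Prop :=
  ∃ S : NormalChain G, ∀ i, (∃ k : ℕ, S.factorCard i = p ^ k) ∨ ¬ p ∣ S.factorCard i

/-- `N < M` is a chief factor of `G`: both are normal in `G` and no normal subgroup of
`G` lies strictly between them. -/
def IsChiefFactorOf (G : Type u) [Group G] (N M : Subgroup G) : Prop :=
  N.Normal ∧ M.Normal ∧ N < M ∧
    ∀ K : Subgroup G, K.Normal → N ≤ K → K ≤ M → K = N ∨ K = M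

/-- A group is `p`-supersolvable if it is `p`-solvable and all its chief factors of
order divisible by `p` are (cyclic) of order `p`. -/
def IsPSupersolvableGrp (p : ℕ) (G : Type u) [Group G] : Prop :=
  IsPSolvableGrp p G ∧
    ∀ N M : Subgroup G, IsChiefFactorOf G N M →
      p ∣ N.relIndex M → N.relIndex M = p

/-- The formation of supersolvable groups, as a class of groups. -/
def supersolvableClass : GroupClass.{u} := fun H inst => @IsSupersolvableGrp H inst

/-- The formation of `p`-supersolvable groups, as a class of groups. -/
def pSupersolvableClass (p : ℕ) : GroupClass.{u} := fun H inst => @IsPSupersolvableGrp p H inst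

/-- `N` is normal in `G` with `G ⧸ N` in the class `C`. -/
def QuotientInClass (C : GroupClass.{u}) {G : Type u} [Group G] (N : Subgroup G) : Prop :=
  ∃ _h : N.Normal, letI := _h; C (G ⧸ N)

/-- The `C`-residual `G^C` of `G`: the intersection of all normal subgroups of `G`
whose quotient lies in `C`. -/
def groupResidual (C : GroupClass.{u}) (G : Type u) [Group G] : Subgroup G :=
  sInf {N : Subgroup G | QuotientInClass C N}

/-- The `C`-residual `T^C` of a subgroup `T` of `G`, viewed as a subgroup of `G`. -/
def residualIn (C : GroupClass.{u}) {G : Type u} [Group G] (T : Subgroup G) : Subgroup G :=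
  Subgroup.map T.subtype (groupResidual C ↥T)

/-- The weak norm `N_C(G, H) = ⋂_{T ≤ H} N_G(T^C)` of `H` in `G` with respect to `C`. -/
def weakNorm (C : GroupClass.{u}) {G : Type u} [Group G] (H : Subgroup G) : Subgroup G :=
  ⨅ (T : Subgroup G) (_ : T ≤ H), Subgroup.normalizer (residualIn C T : Set G)

/-- The norm `N_C(G) = N_C(G, G)` of `G` with respect to `C`. -/
def grpNorm (C : GroupClass.{u}) (G : Type u) [Group G] : Subgroup G :=
  weakNorm C (⊤ : Subgroup G)

/-- `s` is the upper `C`-norm series of `G`: `s 0 = ⊥` and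
`s (i+1) / s i = N_C(G / s i)`. -/
def IsUpperNormSeries (C : GroupClass.{u}) (G : Type u) [Group G]
    (s : ℕ → Subgroup G) : Prop :=
  s 0 = ⊥ ∧ ∀ i : ℕ, ∃ h : (s i).Normal,
    s (i + 1) =
      (letI := h; Subgroup.comap (QuotientGroup.mk' (s i)) (grpNorm C (G ⧸ s i)))

/-- The hypercenter of a group: the terminal term of the upper central series. -/
def hyperCenter (G : Type u) [Group G] : Subgroup G :=
  ⨆ n : ℕ, upperCentralSeries G n

/-- The `p`-Fitting length of `G`: the length of a shortest normal chain of `G`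
all of whose factors are `p`-nilpotent. -/
noncomputable def pFittingLength (p : ℕ) (G : Type u) [Group G] : ℕ :=
  sInf {n : ℕ | ∃ S : NormalChain G, S.len = n ∧
    ∀ i, S.FactorProp (fun H inst => @IsPNilpotentGrp p H inst) i}

/-- The Fitting length of `G`: the length of a shortest normal chain of `G`
all of whose factors are nilpotent. -/
noncomputable def fittingLength (G : Type u) [Group G] : ℕ :=
  sInf {n : ℕ | ∃ S : NormalChain G, S.len = n ∧
    ∀ i, S.FactorProp (fun H inst => @Group.IsNilpotent H inst) i}

/-- The `p`-length of `G`: the least number of `p`-factors in a normal chain of `G`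
each of whose factors is a `p`-group or a `p'`-group. -/
noncomputable def pLength (p : ℕ) (G : Type u) [Group G] : ℕ :=
  sInf {n : ℕ | ∃ S : NormalChain G,
    (∀ i, (∃ k : ℕ, S.factorCard i = p ^ k) ∨ ¬ p ∣ S.factorCard i) ∧
    Nat.card {i : Fin S.len // p ∣ S.factorCard i} ≤ n}

section Aux
open Subgroup
open scoped Pointwise

variable {G A B : Type u} [Group G] [Group A] [Group B] {p : ℕ}

/-- Dedekind modular law for normal subgroups. -/
lemma dedekind {x y z : Subgroup G} (hxz : x ≤ z) (hy : y.Normal) (hz : z.Normal) :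
    (x ⊔ y) ⊓ z = x ⊔ (y ⊓ z) := by
  refine le_antisymm ?_ (sup_le (le_inf le_sup_left hxz) (inf_le_inf le_sup_right le_rfl))
  intro g hg
  have hg1 : g ∈ x ⊔ y := hg.1
  have hg2 : g ∈ z := hg.2
  have hg1' : g ∈ ((x ⊔ y : Subgroup G) : Set G) := hg1
  rw [Subgroup.mul_normal x y] at hg1'
  obtain ⟨a, ha, b, hb, hab⟩ := hg1'
  have hbz : b ∈ z := by
    have hba : b = a⁻¹ * g := by rw [← hab]; group
    rw [hba]; exact mul_mem (inv_mem (hxz ha)) hg2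
  have hgab : g = a * b := hab.symm
  rw [hgab]
  exact mul_mem (le_sup_left (a := x) (b := y ⊓ z) ha)
    (le_sup_right (a := x) (b := y ⊓ z) ⟨hb, hbz⟩)

/-- Relative index of images divides relative index. -/
lemma relindex_map_dvd (f : A →* B) (H K : Subgroup A) :
    (H.map f).relIndex (K.map f) ∣ H.relIndex K := by
  rw [← Subgroup.relIndex_comap]
  exact Subgroup.relIndex_dvd_of_le_left K (Subgroup.le_comap_map f H)

/-- p-power-or-p'-transfer through divisibility. -/
lemma dvd_transfer (hp : p.Prime) {a b : ℕ} (hab : a ∣ b)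
    (h : (∃ k : ℕ, b = p ^ k) ∨ ¬ p ∣ b) : (∃ k : ℕ, a = p ^ k) ∨ ¬ p ∣ a := by
  rcases h with ⟨k, rfl⟩ | h
  · left
    obtain ⟨j, _, rfl⟩ := (Nat.dvd_prime_pow hp).mp hab
    exact ⟨j, rfl⟩
  · exact Or.inr fun hpa => h (hpa.trans hab)

lemma relindex_inf_dvd {N D D' : Subgroup G} (hD : D.Normal) (hDD' : D ≤ D') :
    (N ⊓ D).relIndex (N ⊓ D') ∣ D.relIndex D' := by
  have h1 : N ⊓ D = (N ⊓ D') ⊓ D := by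
    rw [inf_assoc, inf_eq_right.mpr hDD']
  rw [h1, inf_comm (N ⊓ D') D, Subgroup.inf_relIndex_right]
  have h2 : D.relIndex (N ⊓ D') = D.relIndex ((N ⊓ D') ⊔ D) :=
    (Subgroup.relIndex_sup_right (K := D) (H := N ⊓ D')).symm
  rw [h2]
  exact ⟨_, (Subgroup.relIndex_mul_relIndex (H := D) (K := (N ⊓ D') ⊔ D) (L := D')
      le_sup_right (sup_le (inf_le_right) hDD')).symm⟩

end Aux
section Aux2
open Subgroup

variable {G A B : Type u} [Group G] [Group A] [Group B] {p : ℕ}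

lemma chief_comap (f : A →* B) (hf : Function.Surjective f) {N M : Subgroup B}
    (h : IsChiefFactorOf B N M) :
    IsChiefFactorOf A (N.comap f) (M.comap f) ∧
      (N.comap f).relIndex (M.comap f) = N.relIndex M := by
  obtain ⟨hN, hM, hlt, hmax⟩ := h
  constructor
  · refine ⟨hN.comap f, hM.comap f, ?_, ?_⟩
    · refine lt_of_le_of_ne (Subgroup.comap_mono hlt.le) fun he => ?_
      have := congrArg (Subgroup.map f) he
      rw [Subgroup.map_comap_eq_self_of_surjective hf,
        Subgroup.map_comap_eq_self_of_surjective hf] at this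
      exact hlt.ne this
    · intro K hK hNK hKM
      have hkerK : f.ker ≤ K := le_trans (by
        rw [← MonoidHom.comap_bot]; exact Subgroup.comap_mono bot_le) hNK
      have hmapK := hmax (K.map f) (hK.map f hf)
        (by rw [← Subgroup.map_comap_eq_self_of_surjective hf N]; exact Subgroup.map_mono hNK)
        (by rw [← Subgroup.map_comap_eq_self_of_surjective hf M]; exact Subgroup.map_mono hKM)
      rcases hmapK with hh | hh
      · left
        rw [← Subgroup.comap_map_eq_self hkerK, hh]
      · right
        rw [← Subgroup.comap_map_eq_self hkerK, hh]
  · rw [Subgroup.relIndex_comap, Subgroup.map_comap_eq_self_of_surjective hf]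

lemma chief_map (f : A →* B) (hf : Function.Surjective f) {N M : Subgroup A}
    (hker : f.ker ≤ N) (h : IsChiefFactorOf A N M) :
    IsChiefFactorOf B (N.map f) (M.map f) ∧
      (N.map f).relIndex (M.map f) = N.relIndex M := by
  obtain ⟨hN, hM, hlt, hmax⟩ := h
  have hkerM : f.ker ≤ M := le_trans hker hlt.le
  constructor
  · refine ⟨hN.map f hf, hM.map f hf, ?_, ?_⟩
    · refine lt_of_le_of_ne (Subgroup.map_mono hlt.le) fun he => ?_
      have := congrArg (Subgroup.comap f) he
      rw [Subgroup.comap_map_eq_self hker, Subgroup.comap_map_eq_self hkerM] at this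
      exact hlt.ne this
    · intro K hK hNK hKM
      have h1 : N ≤ K.comap f := by
        rw [← Subgroup.comap_map_eq_self hker]; exact Subgroup.comap_mono hNK
      have h2 : K.comap f ≤ M := by
        rw [← Subgroup.comap_map_eq_self hkerM]; exact Subgroup.comap_mono hKM
      rcases hmax (K.comap f) (hK.comap f) h1 h2 with hh | hh
      · left
        rw [← Subgroup.map_comap_eq_self_of_surjective hf K, hh]
      · right
        rw [← Subgroup.map_comap_eq_self_of_surjective hf K, hh]
  · rw [← Subgroup.relIndex_comap, Subgroup.comap_map_eq_self hker]

/-- The key chief-factor transport lemma. -/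
lemma chief_aux {L K N A' : Subgroup G} (hLK : IsChiefFactorOf G L K) (hN : N.Normal)
    (hA : A'.Normal) (hAK : A' ≤ K) (hKLA : K = L ⊔ A') (hAN : A' ⊓ N ≤ L) :
    IsChiefFactorOf G ((A' ⊓ L) ⊔ N) (A' ⊔ N) ∧ N ≤ (A' ⊓ L) ⊔ N ∧
      ((A' ⊓ L) ⊔ N).relIndex (A' ⊔ N) = L.relIndex K := by
  obtain ⟨hLnormal, hKnormal, hlt, hmax⟩ := hLK
  have hANL : A' ⊓ N ≤ A' ⊓ L := le_inf inf_le_left hAN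
  -- A ⊓ ((A⊓L) ⊔ N) = A⊓L
  have hkey : A' ⊓ ((A' ⊓ L) ⊔ N) = A' ⊓ L := by
    rw [inf_comm A' ((A' ⊓ L) ⊔ N), dedekind inf_le_left hN hA]
    rw [inf_comm N A']
    exact sup_eq_left.mpr hANL
  have hALn : (A' ⊓ L).Normal := Subgroup.normal_inf_normal _ _ (hH := hA) (hK := hLnormal)
  have hLt : ((A' ⊓ L) ⊔ N).Normal := Subgroup.sup_normal _ _ (hH := hALn) (hK := hN)
  have hKt : (A' ⊔ N).Normal := Subgroup.sup_normal _ _ (hH := hA) (hK := hN)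
  have hKt_eq : A' ⊔ ((A' ⊓ L) ⊔ N) = A' ⊔ N := by
    rw [← sup_assoc, sup_eq_left.mpr (inf_le_left : A' ⊓ L ≤ A')]
  have hle : ((A' ⊓ L) ⊔ N) ≤ A' ⊔ N := sup_le (le_trans inf_le_left le_sup_left) le_sup_right
  refine ⟨⟨hLt, hKt, ?_, ?_⟩, le_sup_right, ?_⟩
  · refine lt_of_le_of_ne hle fun he => ?_
    have hA_le : A' ≤ (A' ⊓ L) ⊔ N := by rw [he]; exact le_sup_left
    have : A' ≤ A' ⊓ L := by
      have := le_inf le_rfl hA_le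
      rw [hkey] at this; exact this
    have hKL : K = L := by rw [hKLA, sup_eq_left.mpr (le_trans this inf_le_right)]
    exact hlt.ne hKL.symm
  · intro J hJ hLJ hJK
    have hNJ : N ≤ J := le_trans le_sup_right hLJ
    have hJA : (J ⊓ A').Normal := Subgroup.normal_inf_normal _ _ (hH := hJ) (hK := hA)
    have hmid : L ≤ (J ⊓ A') ⊔ L := le_sup_right
    have hmid2 : (J ⊓ A') ⊔ L ≤ K := sup_le (le_trans inf_le_right hAK) hlt.le
    rcases hmax ((J ⊓ A') ⊔ L) (Subgroup.sup_normal _ _ (hH := hJA) (hK := hLnormal))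
      hmid hmid2 with hh | hh
    · -- J ⊓ A' ≤ L, hence J = (A'⊓L) ⊔ N
      left
      have hJAL : J ⊓ A' ≤ A' ⊓ L := le_inf inf_le_right (le_trans le_sup_left hh.le)
      have h1 : (N ⊔ A') ⊓ J = N ⊔ (A' ⊓ J) := dedekind hNJ hA hJ
      have h2 : (N ⊔ A') ⊓ J = J := inf_eq_right.mpr (by rw [sup_comm]; exact hJK)
      refine le_antisymm ?_ hLJ
      rw [← h2, h1, sup_comm (A' ⊓ L) N]
      refine sup_le_sup_left (le_trans (le_of_eq (inf_comm A' J)) hJAL) N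
    · -- (J⊓A') ⊔ L = K : then A' ≤ J and so J = A' ⊔ N
      right
      have hAJL : A' ≤ (J ⊓ A') ⊔ L := by rw [hh, hKLA]; exact le_sup_right
      have h1 : ((J ⊓ A') ⊔ L) ⊓ A' = (J ⊓ A') ⊔ (L ⊓ A') := dedekind inf_le_right hLnormal hA
      have h2 : ((J ⊓ A') ⊔ L) ⊓ A' = A' := inf_eq_right.mpr hAJL
      have hAJ : A' ≤ J := by
        rw [← h2, h1]
        exact sup_le inf_le_left
          (le_trans (le_trans (le_of_eq (inf_comm L A')) (le_trans le_sup_left hLJ)) le_rfl)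
      exact le_antisymm hJK (sup_le hAJ hNJ)
  · -- relindex computation
    haveI := hLnormal
    haveI := hLt
    have e1 : L.relIndex K = (A' ⊓ L).relIndex A' := by
      rw [hKLA, sup_comm L A', Subgroup.relIndex_sup_right,
        ← Subgroup.inf_relIndex_right L A', inf_comm L A']
    have e2 : ((A' ⊓ L) ⊔ N).relIndex (A' ⊔ N) = (A' ⊓ L).relIndex A' := by
      rw [← hKt_eq, Subgroup.relIndex_sup_right,
        ← Subgroup.inf_relIndex_right ((A' ⊓ L) ⊔ N) A', inf_comm ((A' ⊓ L) ⊔ N) A', hkey,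
        inf_comm A' L, Subgroup.inf_relIndex_right, ← Subgroup.inf_relIndex_right L A',
        inf_comm L A']
    rw [e1, e2]

end Aux2
section Aux3
open Subgroup

variable {G A B : Type u} [Group G] [Group A] [Group B] {p : ℕ}

lemma subgroup_bot_eq_top_of_subsingleton [Subsingleton G] : (⊥ : Subgroup G) = ⊤ := by
  ext x; simp [Subsingleton.elim x 1]

lemma pss_of_subsingleton (G : Type u) [Group G] [Subsingleton G] :
    IsPSupersolvableGrp p G := by
  constructor
  · exact ⟨⟨0, fun _ => ⊥, monotone_const, rfl,
      subgroup_bot_eq_top_of_subsingleton, fun _ => inferInstance⟩, fun i => i.elim0⟩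
  · intro N M h _
    have h2 := h.2.2.1
    rw [Subsingleton.elim N M] at h2
    exact (lt_irrefl M h2).elim

lemma psolv_of_surjective (hp : p.Prime) (f : A →* B) (hf : Function.Surjective f)
    (h : IsPSolvableGrp p A) : IsPSolvableGrp p B := by
  obtain ⟨S, hS⟩ := h
  refine ⟨⟨S.len, fun i => (S.ser i).map f, fun i j hij => Subgroup.map_mono (S.mono hij),
    by show (S.ser 0).map f = ⊥; rw [S.bot_eq]; exact Subgroup.map_bot f,
    by show (S.ser (Fin.last S.len)).map f = ⊤; rw [S.top_eq]; exact Subgroup.map_top_of_surjective f hf,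
    fun i => (S.normal i).map f hf⟩, ?_⟩
  intro i
  exact dvd_transfer hp (relindex_map_dvd f (S.ser i.castSucc) (S.ser i.succ)) (hS i)

lemma pss_of_surjective (hp : p.Prime) (f : A →* B) (hf : Function.Surjective f)
    (h : IsPSupersolvableGrp p A) : IsPSupersolvableGrp p B := by
  refine ⟨psolv_of_surjective hp f hf h.1, ?_⟩
  intro N M hNM hdvd
  obtain ⟨hchief, hrel⟩ := chief_comap f hf hNM
  rw [← hrel]
  exact h.2 _ _ hchief (by rw [hrel]; exact hdvd)

lemma pss_of_mulEquiv (hp : p.Prime) (e : A ≃* B) (h : IsPSupersolvableGrp p A) :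
    IsPSupersolvableGrp p B :=
  pss_of_surjective hp e.toMonoidHom e.surjective h

end Aux3
section Aux4
open Subgroup

variable {G : Type u} [Group G] {p : ℕ}

lemma psolv_quot_inf (hp : p.Prime) (N1 N2 : Subgroup G) [hn1 : N1.Normal]
    [hn2 : N2.Normal] (h1 : IsPSolvableGrp p (G ⧸ N1)) (h2 : IsPSolvableGrp p (G ⧸ N2)) :
    IsPSolvableGrp p (G ⧸ (N1 ⊓ N2)) := by
  obtain ⟨C1, hC1⟩ := h1
  obtain ⟨D2, hD2⟩ := h2
  set n := C1.len with hn
  set m := D2.len with hm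
  set π : G →* G ⧸ (N1 ⊓ N2) := QuotientGroup.mk' (N1 ⊓ N2) with hπ
  have hπs : Function.Surjective π := QuotientGroup.mk'_surjective _
  set cC : ℕ → Fin (n + 1) := fun k => ⟨min k n, Nat.lt_succ_of_le (min_le_right k n)⟩ with hcC
  set cD : ℕ → Fin (m + 1) := fun k => ⟨min k m, Nat.lt_succ_of_le (min_le_right k m)⟩ with hcD
  set Tn : ℕ → Subgroup G := fun k => Subgroup.comap (QuotientGroup.mk' N1) (C1.ser (cC k))
    with hTn
  set Dn : ℕ → Subgroup G := fun k => Subgroup.comap (QuotientGroup.mk' N2) (D2.ser (cD k))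
    with hDn
  set u : ℕ → Subgroup (G ⧸ (N1 ⊓ N2)) := fun k =>
    if k ≤ m then Subgroup.map π (N1 ⊓ Dn k) else Subgroup.map π (Tn (k - m)) with hu
  have hTmono : ∀ {j k : ℕ}, j ≤ k → Tn j ≤ Tn k := fun {j k} hjk =>
    Subgroup.comap_mono (C1.mono (by simp only [hcC, Fin.mk_le_mk]; omega))
  have hDmono : ∀ {j k : ℕ}, j ≤ k → Dn j ≤ Dn k := fun {j k} hjk =>
    Subgroup.comap_mono (D2.mono (by simp only [hcD, Fin.mk_le_mk]; omega))
  have hT0 : Tn 0 = N1 := by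
    have h0 : cC 0 = 0 := by simp only [hcC]; exact Fin.ext (by simp)
    simp only [hTn, h0, C1.bot_eq, MonoidHom.comap_bot, QuotientGroup.ker_mk']
  have hTtop : Tn n = ⊤ := by
    have h0 : cC n = Fin.last n := by simp only [hcC]; exact Fin.ext (by simp)
    simp only [hTn, h0, C1.top_eq, Subgroup.comap_top]
    exact (congrArg (Subgroup.comap (QuotientGroup.mk' N1)) C1.top_eq).trans (Subgroup.comap_top _)
  have hD0 : Dn 0 = N2 := by
    have h0 : cD 0 = 0 := by simp only [hcD]; exact Fin.ext (by simp)
    simp only [hDn, h0, D2.bot_eq, MonoidHom.comap_bot, QuotientGroup.ker_mk']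
  have hDtop : Dn m = ⊤ := by
    have h0 : cD m = Fin.last m := by simp only [hcD]; exact Fin.ext (by simp)
    simp only [hDn, h0, D2.top_eq, Subgroup.comap_top]
    exact (congrArg (Subgroup.comap (QuotientGroup.mk' N2)) D2.top_eq).trans (Subgroup.comap_top _)
  have hjunc : ∀ k, m ≤ k → u k = Subgroup.map π (Tn (k - m)) := by
    intro k hk
    by_cases hkm : k ≤ m
    · have hkeq : k = m := le_antisymm hkm hk
      subst hkeq
      simp only [hu, if_pos le_rfl, Nat.sub_self, hT0, hDtop, inf_top_eq]
    · simp only [hu, if_neg hkm]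
  have hstep : ∀ k, u k ≤ u (k + 1) := by
    intro k
    rcases lt_trichotomy k m with hkm | hkm | hkm
    · have e1 : u k = Subgroup.map π (N1 ⊓ Dn k) := by simp only [hu, if_pos hkm.le]
      have e2 : u (k + 1) = Subgroup.map π (N1 ⊓ Dn (k + 1)) := by
        simp only [hu]; rw [if_pos (by omega : k + 1 ≤ m)]
      rw [e1, e2]
      exact Subgroup.map_mono (inf_le_inf le_rfl (hDmono (Nat.le_succ k)))
    · rw [hjunc k hkm.ge, hjunc (k + 1) (by omega)]
      exact Subgroup.map_mono (hTmono (by omega))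
    · rw [hjunc k hkm.le, hjunc (k + 1) (by omega)]
      exact Subgroup.map_mono (hTmono (by omega))
  have h0 : u 0 = ⊥ := by
    simp only [hu, if_pos (Nat.zero_le m), hD0, Subgroup.map_eq_bot_iff, hπ,
      QuotientGroup.ker_mk']
    exact le_rfl
  have htop : u (m + n) = ⊤ := by
    rw [hjunc (m + n) (by omega)]
    have : m + n - m = n := by omega
    rw [this, hTtop]
    exact Subgroup.map_top_of_surjective π hπs
  have hnormal : ∀ k, (u k).Normal := by
    intro k
    have hDnorm : (Dn k).Normal := (D2.normal _).comap _
    have hTnorm : (Tn (k - m)).Normal := (C1.normal _).comap _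
    by_cases hk : k ≤ m
    · simp only [hu, if_pos hk]
      exact (Subgroup.normal_inf_normal N1 (Dn k) (hK := hDnorm)).map π hπs
    · simp only [hu, if_neg hk]
      exact hTnorm.map π hπs
  refine ⟨⟨m + n, fun i => u i.val,
    fun i j hij => monotone_nat_of_le_succ hstep hij,
    by show u (0 : Fin (m + n + 1)).val = ⊥; rw [Fin.val_zero]; exact h0,
    by show u (Fin.last (m + n)).val = ⊤; rw [Fin.val_last]; exact htop,
    fun i => hnormal i.val⟩, ?_⟩
  intro i
  show (∃ k, (u i.castSucc.val).relIndex (u i.succ.val) = p ^ k) ∨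
    ¬ p ∣ (u i.castSucc.val).relIndex (u i.succ.val)
  have hilt : (i : ℕ) < m + n := i.isLt
  have hcs : (i.castSucc.val : ℕ) = i.val := rfl
  have hsc : (i.succ.val : ℕ) = i.val + 1 := rfl
  rw [hcs, hsc]
  by_cases hk : (i : ℕ) < m
  · have e1 : u i.val = Subgroup.map π (N1 ⊓ Dn i.val) := by simp only [hu, if_pos hk.le]
    have e2 : u (i.val + 1) = Subgroup.map π (N1 ⊓ Dn (i.val + 1)) := by
      simp only [hu]; rw [if_pos (by omega : i.val + 1 ≤ m)]
    rw [e1, e2]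
    have hDnorm : (Dn i.val).Normal := (D2.normal _).comap _
    refine dvd_transfer hp ((relindex_map_dvd π _ _).trans
      (relindex_inf_dvd hDnorm (hDmono (Nat.le_succ _)))) ?_
    have heq : (Dn i.val).relIndex (Dn (i.val + 1)) = D2.factorCard ⟨i.val, hk⟩ := by
      have i1 : cD i.val = (⟨i.val, hk⟩ : Fin m).castSucc := by
        simp only [hcD]; exact Fin.ext (by simp [Fin.coe_castSucc]; omega)
      have i2 : cD (i.val + 1) = (⟨i.val, hk⟩ : Fin m).succ := by
        simp only [hcD]; exact Fin.ext (by simp [Fin.val_succ]; omega)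
      simp only [hDn, i1, i2, Subgroup.relIndex_comap,
        Subgroup.map_comap_eq_self_of_surjective (QuotientGroup.mk'_surjective N2)]
      rfl
    rw [heq]
    exact hD2 ⟨i.val, hk⟩
  · have hmi : m ≤ i.val := by omega
    rw [hjunc i.val hmi, hjunc (i.val + 1) (by omega)]
    have hj : i.val + 1 - m = (i.val - m) + 1 := by omega
    rw [hj]
    have hjlt : i.val - m < n := by omega
    refine dvd_transfer hp (relindex_map_dvd π _ _) ?_
    have heq : (Tn (i.val - m)).relIndex (Tn (i.val - m + 1)) = C1.factorCard ⟨i.val - m, hjlt⟩ := by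
      have i1 : cC (i.val - m) = (⟨i.val - m, hjlt⟩ : Fin n).castSucc := by
        simp only [hcC]; exact Fin.ext (by simp [Fin.coe_castSucc]; omega)
      have i2 : cC (i.val - m + 1) = (⟨i.val - m, hjlt⟩ : Fin n).succ := by
        simp only [hcC]; exact Fin.ext (by simp [Fin.val_succ]; omega)
      simp only [hTn, i1, i2, Subgroup.relIndex_comap,
        Subgroup.map_comap_eq_self_of_surjective (QuotientGroup.mk'_surjective N1)]
      rfl
    rw [heq]
    exact hC1 ⟨i.val - m, hjlt⟩

end Aux4
lemma pss_quot_inf {G : Type u} [Group G] {p : ℕ} (hp : p.Prime) (N1 N2 : Subgroup G)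
    [hn1 : N1.Normal] [hn2 : N2.Normal]
    (h1 : IsPSupersolvableGrp p (G ⧸ N1)) (h2 : IsPSupersolvableGrp p (G ⧸ N2)) :
    IsPSupersolvableGrp p (G ⧸ (N1 ⊓ N2)) := by
  refine ⟨psolv_quot_inf hp N1 N2 h1.1 h2.1, ?_⟩
  intro L' K' hck hdvd
  have hπs := QuotientGroup.mk'_surjective (N1 ⊓ N2)
  obtain ⟨hchief, hrel⟩ := chief_comap (QuotientGroup.mk' (N1 ⊓ N2)) hπs hck
  set L := Subgroup.comap (QuotientGroup.mk' (N1 ⊓ N2)) L' with hL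
  set K := Subgroup.comap (QuotientGroup.mk' (N1 ⊓ N2)) K' with hK
  obtain ⟨hLn, hKn, hLK, hmax⟩ := hck
  have hLn' : L.Normal := hLn.comap _
  have hKn' : K.Normal := hKn.comap _
  have hLK' : L < K := hchief.2.2.1
  have hkerL : N1 ⊓ N2 ≤ L := fun x hx => by
    have hx1 : (QuotientGroup.mk' (N1 ⊓ N2)) x = 1 := by
      have : x ∈ (QuotientGroup.mk' (N1 ⊓ N2)).ker := by
        rw [QuotientGroup.ker_mk']; exact hx
      exact this
    show (QuotientGroup.mk' (N1 ⊓ N2)) x ∈ L'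
    rw [hx1]; exact L'.one_mem
  have hdvd' : p ∣ L.relIndex K := by rw [hrel]; exact hdvd
  rw [← hrel]
  have hnorm1 : (K ⊓ (L ⊔ N1)).Normal :=
    Subgroup.normal_inf_normal _ _ (hH := hKn')
      (hK := Subgroup.sup_normal _ _ (hH := hLn') (hK := hn1))
  rcases hchief.2.2.2 _ hnorm1 (le_inf hLK'.le le_sup_left) inf_le_left with hcase | hcase
  · -- K ⊓ (L ⊔ N1) = L : take A' = K, push above N1
    have hKLA : K = L ⊔ K := (sup_eq_right.mpr hLK'.le).symm
    have hAN : K ⊓ N1 ≤ L := by rw [← hcase]; exact inf_le_inf le_rfl le_sup_right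
    obtain ⟨hch2, hle2, hrel2⟩ := chief_aux hchief hn1 hKn' le_rfl hKLA hAN
    have hker1 : (QuotientGroup.mk' N1).ker ≤ (K ⊓ L) ⊔ N1 := by
      rw [QuotientGroup.ker_mk']; exact hle2
    obtain ⟨hch3, hrel3⟩ := chief_map (QuotientGroup.mk' N1)
      (QuotientGroup.mk'_surjective N1) hker1 hch2
    have := h1.2 _ _ hch3 (by rw [hrel3, hrel2]; exact hdvd')
    rw [hrel3, hrel2] at this
    exact this
  · -- K ≤ L ⊔ N1 : take A' = K ⊓ N1, push above N2
    have hKle : K ≤ L ⊔ N1 := inf_eq_left.mp hcase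
    have hAn : (K ⊓ N1).Normal := Subgroup.normal_inf_normal _ _ (hH := hKn') (hK := hn1)
    have hKLA : K = L ⊔ (K ⊓ N1) := by
      have hd : (L ⊔ N1) ⊓ K = L ⊔ (N1 ⊓ K) := dedekind hLK'.le hn1 hKn'
      rw [inf_comm N1 K] at hd
      rw [← hd, inf_comm (L ⊔ N1) K, hcase]
    have hAN : (K ⊓ N1) ⊓ N2 ≤ L := le_trans (by rw [inf_assoc]; exact inf_le_right) hkerL
    obtain ⟨hch2, hle2, hrel2⟩ := chief_aux hchief hn2 hAn inf_le_left hKLA hAN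
    have hker2 : (QuotientGroup.mk' N2).ker ≤ ((K ⊓ N1) ⊓ L) ⊔ N2 := by
      rw [QuotientGroup.ker_mk']; exact hle2
    obtain ⟨hch3, hrel3⟩ := chief_map (QuotientGroup.mk' N2)
      (QuotientGroup.mk'_surjective N2) hker2 hch2
    have := h2.2 _ _ hch3 (by rw [hrel3, hrel2]; exact hdvd')
    rw [hrel3, hrel2] at this
    exact this
section Aux6

lemma groupResidual_normal (C : GroupClass.{u}) (G : Type u) [Group G] :
    (groupResidual C G).Normal := by
  constructor
  intro x hx g
  rw [groupResidual, Subgroup.mem_sInf] at hx ⊢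
  intro N hN
  obtain ⟨hNn, hq⟩ := hN
  exact hNn.conj_mem x (hx N ⟨hNn, hq⟩) g

lemma sInf_mem_of_infClosed {α : Type*} [CompleteLattice α] {s : Set α} (hfin : s.Finite)
    (hne : s.Nonempty) (hcl : ∀ a ∈ s, ∀ b ∈ s, a ⊓ b ∈ s) : sInf s ∈ s := by
  classical
  have key : ∀ t : Finset α, ↑t ⊆ s → (t : Set α).Nonempty → sInf (t : Set α) ∈ s := by
    intro t
    induction t using Finset.induction_on with
    | empty => intro _ h; simp at h
    | @insert a t ha ih =>
      intro hsub hne'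
      have h2 : a ∈ s := hsub (Finset.mem_insert_self a t)
      rcases t.eq_empty_or_nonempty with rfl | htne
      · simpa using h2
      · have hsub' : ↑t ⊆ s := fun x hx => hsub (by simp [hx])
        have h1 : sInf (t : Set α) ∈ s := ih hsub' (by simpa using htne)
        have he : sInf ((insert a t : Finset α) : Set α) = a ⊓ sInf (t : Set α) := by
          rw [Finset.coe_insert, sInf_insert]
        rw [he]
        exact hcl a h2 _ h1
  have h := key hfin.toFinset (by simp) (by simpa using hne)
  rwa [Set.Finite.coe_toFinset] at h

variable {p : ℕ}

lemma pss_quot_groupResidual (G : Type u) [Group G] [Finite G] (hp : p.Prime) :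
    letI := groupResidual_normal (pSupersolvableClass p) G
    IsPSupersolvableGrp p (G ⧸ groupResidual (pSupersolvableClass p) G) := by
  haveI := groupResidual_normal (pSupersolvableClass p) G
  haveI : Finite (Subgroup G) := Finite.of_injective _ SetLike.coe_injective
  have hmem : groupResidual (pSupersolvableClass p) G ∈
      {N : Subgroup G | QuotientInClass (pSupersolvableClass p) N} := by
    apply sInf_mem_of_infClosed (Set.toFinite _)
    · refine ⟨⊤, ⟨inferInstance, ?_⟩⟩
      haveI : Subsingleton (G ⧸ (⊤ : Subgroup G)) := QuotientGroup.subsingleton_quotient_top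
      exact pss_of_subsingleton _
    · rintro a ⟨ha, hca⟩ b ⟨hb, hcb⟩
      haveI := ha; haveI := hb
      exact ⟨inferInstance, pss_quot_inf hp a b hca hcb⟩
  obtain ⟨hn, hc⟩ := hmem
  exact hc

lemma groupResidual_map {A B : Type u} [Group A] [Group B] [Finite A] (hp : p.Prime)
    (f : A →* B) (hf : Function.Surjective f) :
    (groupResidual (pSupersolvableClass p) A).map f = groupResidual (pSupersolvableClass p) B := by
  haveI : Finite B := Finite.of_surjective f hf
  haveI hRA := groupResidual_normal (pSupersolvableClass p) A
  refine le_antisymm (le_sInf ?_) (sInf_le ?_)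
  · rintro N ⟨hNn, hNc⟩
    haveI := hNn
    rw [Subgroup.map_le_iff_le_comap]
    apply sInf_le
    refine ⟨hNn.comap f, ?_⟩
    have hsurj : Function.Surjective ((QuotientGroup.mk' N).comp f) :=
      (QuotientGroup.mk'_surjective N).comp hf
    have hker : ((QuotientGroup.mk' N).comp f).ker = N.comap f := by
      rw [← MonoidHom.comap_ker, QuotientGroup.ker_mk']
    have e : (A ⧸ N.comap f) ≃* (B ⧸ N) :=
      (QuotientGroup.quotientMulEquivOfEq hker.symm).trans
        (QuotientGroup.quotientKerEquivOfSurjective _ hsurj)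
    exact pss_of_mulEquiv hp e.symm hNc
  · refine ⟨hRA.map f hf, ?_⟩
    haveI := hRA.map f hf
    set R := groupResidual (pSupersolvableClass p) A with hR
    have hle : R ≤ ((QuotientGroup.mk' (R.map f)).comp f).ker := by
      intro x hx
      have : f x ∈ R.map f := Subgroup.mem_map_of_mem f hx
      simp only [MonoidHom.mem_ker, MonoidHom.comp_apply]
      rwa [← QuotientGroup.ker_mk' (R.map f), MonoidHom.mem_ker] at this
    have hlift : ∀ x ∈ R, ((QuotientGroup.mk' (R.map f)).comp f) x = 1 := fun x hx => hle hx
    have hsurj2 : Function.Surjective (QuotientGroup.lift R _ hlift) := by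
      intro y
      obtain ⟨b, rfl⟩ := QuotientGroup.mk'_surjective (R.map f) y
      obtain ⟨a, rfl⟩ := hf b
      exact ⟨QuotientGroup.mk a, rfl⟩
    exact pss_of_surjective hp _ hsurj2 (pss_quot_groupResidual A hp)

lemma residualIn_map {A B : Type u} [Group A] [Group B] [Finite A] (hp : p.Prime)
    (f : A →* B) (T : Subgroup A) :
    (residualIn (pSupersolvableClass p) T).map f =
      residualIn (pSupersolvableClass p) (T.map f) := by
  rw [residualIn, residualIn, Subgroup.map_map]
  have key : (groupResidual (pSupersolvableClass p) ↥(T.map f)) =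
      (groupResidual (pSupersolvableClass p) ↥T).map (f.subgroupMap T) :=
    (groupResidual_map hp (f.subgroupMap T) (f.subgroupMap_surjective T)).symm
  rw [key, Subgroup.map_map]
  congr 1

end Aux6
lemma grpNorm_map_le {A B : Type u} [Group A] [Group B] [Finite A] {p : ℕ} (hp : p.Prime)
    (f : A →* B) (hf : Function.Surjective f) :
    (grpNorm (pSupersolvableClass p) A).map f ≤ grpNorm (pSupersolvableClass p) B := by
  rintro y ⟨x, hx, rfl⟩
  rw [grpNorm, weakNorm] at hx ⊢
  rw [Subgroup.mem_iInf]
  intro S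
  rw [Subgroup.mem_iInf]
  intro hS
  have hx' : x ∈ Subgroup.normalizer (residualIn (pSupersolvableClass p) (S.comap f) : Set A) := by
    have h := Subgroup.mem_iInf.mp hx (S.comap f)
    exact Subgroup.mem_iInf.mp h le_top
  have h1 : f x ∈ (Subgroup.normalizer (residualIn (pSupersolvableClass p) (S.comap f) : Set A)).map f :=
    Subgroup.mem_map_of_mem f hx'
  have h2 : f x ∈ Subgroup.normalizer (((residualIn (pSupersolvableClass p) (S.comap f)).map f : Subgroup B) : Set B) :=
    Subgroup.le_normalizer_map f h1
  rwa [residualIn_map hp f (S.comap f), Subgroup.map_comap_eq_self_of_surjective hf S] at h2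
/-- For every finite group `G` and prime `p`, the terminal term
`N^∞_{𝒰_p}(G)` of the upper `𝒰_p`-norm series equals the intersection of all normal
subgroups `N` of `G` such that `N_{𝒰_p}(G/N) = 1`. -/
theorem terminal_upperNormSeries_eq_sInf
    {G : Type u} [Group G] [Finite G] {p : ℕ} (hp : p.Prime)
    (s : ℕ → Subgroup G) (hs : IsUpperNormSeries (pSupersolvableClass p) G s)
    (n : ℕ) (hstab : ∀ m : ℕ, n ≤ m → s m = s n) :
    s n = sInf {N : Subgroup G | ∃ h : N.Normal,
      (letI := h; grpNorm (pSupersolvableClass p) (G ⧸ N) = ⊥)} := by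
  obtain ⟨hs0, hstep⟩ := hs
  refine le_antisymm (le_sInf ?_) (sInf_le ?_)
  · -- s n ≤ every N with trivial norm of the quotient
    rintro N ⟨hNn, hbot⟩
    haveI := hNn
    have claim : ∀ i, s i ≤ N := by
      intro i
      induction i with
      | zero => rw [hs0]; exact bot_le
      | succ i ih =>
        obtain ⟨hni, heqi⟩ := hstep i
        haveI := hni
        set f : (G ⧸ s i) →* (G ⧸ N) :=
          QuotientGroup.map (s i) N (MonoidHom.id G) (by
            intro x hx
            exact Subgroup.mem_comap.mpr (ih hx)) with hf
        have hfs : Function.Surjective f := by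
          intro y
          obtain ⟨g, rfl⟩ := QuotientGroup.mk'_surjective N y
          exact ⟨QuotientGroup.mk g, rfl⟩
        intro x hx
        rw [heqi] at hx
        have hx1 : (QuotientGroup.mk' (s i)) x ∈ grpNorm (pSupersolvableClass p) (G ⧸ s i) :=
          Subgroup.mem_comap.mp hx
        have hx2 : f ((QuotientGroup.mk' (s i)) x) ∈
            (grpNorm (pSupersolvableClass p) (G ⧸ s i)).map f :=
          Subgroup.mem_map_of_mem f hx1
        have hx3 := grpNorm_map_le hp f hfs hx2
        rw [hbot, Subgroup.mem_bot] at hx3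
        have hx4 : ((x : G) : G ⧸ N) = 1 := hx3
        exact (QuotientGroup.eq_one_iff x).mp hx4
    exact claim n
  · -- s n belongs to the set
    obtain ⟨hnorm, heq⟩ := hstep n
    refine ⟨hnorm, ?_⟩
    have h1 : s (n + 1) = s n := hstab (n + 1) (Nat.le_succ n)
    have h2 : Subgroup.comap (QuotientGroup.mk' (s n))
        (grpNorm (pSupersolvableClass p) (G ⧸ s n)) = s n := by rw [← heq, h1]
    have h3 := congrArg (Subgroup.map (QuotientGroup.mk' (s n))) h2
    have hmapbot : (s n).map (QuotientGroup.mk' (s n)) = ⊥ := by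
      rw [Subgroup.map_eq_bot_iff, QuotientGroup.ker_mk']
    rwa [Subgroup.map_comap_eq_self_of_surjective (QuotientGroup.mk'_surjective (s n)),
      hmapbot] at h3
end

section
/- Let G be a finite p-solvable group. Then the 𝒰_p-residual of N_{𝒰_p}(G) is a p-group. -/
universe u

open Subgroup Pointwise

namespace StSix

variable {X Y : Type u} [Group X] [Group Y]

theorem card_dvd_of_injective' [Finite Y] (f : X →* Y) (hf : Function.Injective f) :
    Nat.card X ∣ Nat.card Y := by
  haveI : Finite X := Finite.of_injective f hf
  calc Nat.card X = Nat.card f.range :=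
        Nat.card_congr (MonoidHom.ofInjective hf).toEquiv
    _ ∣ Nat.card Y := Subgroup.card_subgroup_dvd_card _

theorem card_dvd_of_surjective' [Finite X] (f : X →* Y) (hf : Function.Surjective f) :
    Nat.card Y ∣ Nat.card X := by
  have e := QuotientGroup.quotientKerEquivOfSurjective f hf
  rw [← Nat.card_congr e.toEquiv, Subgroup.card_eq_card_quotient_mul_card_subgroup f.ker]
  exact Dvd.intro _ rfl

theorem relindex_eq_card (A B : Subgroup X) :
    A.relIndex B = Nat.card (↥B ⧸ A.subgroupOf B) := rfl

theorem surjective_quotientMap {N : Subgroup X} [N.Normal] {M : Subgroup Y} [M.Normal]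
    (f : X →* Y) (h : N ≤ comap f M) (hf : Function.Surjective f) :
    Function.Surjective (QuotientGroup.map N M f h) := by
  intro y
  refine QuotientGroup.induction_on y fun b => ?_
  obtain ⟨a, rfl⟩ := hf b
  exact ⟨QuotientGroup.mk a, rfl⟩

theorem injective_quotientMap {N : Subgroup X} [N.Normal] {M : Subgroup Y} [M.Normal]
    (f : X →* Y) (h : N ≤ comap f M) (h2 : comap f M ≤ N) :
    Function.Injective (QuotientGroup.map N M f h) := by
  intro a b
  refine QuotientGroup.induction_on a fun x => QuotientGroup.induction_on b fun y hxy => ?_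
  have hxy' : (QuotientGroup.mk (f x) : Y ⧸ M) = QuotientGroup.mk (f y) := hxy
  rw [QuotientGroup.eq] at hxy' ⊢
  apply h2
  simpa using hxy'

/-- Master section-comparison: a surjective map with kernel inside `A`
preserves the relative index of `A` in `B` (both normal). -/
theorem relindex_map_of_surjective (f : X →* Y) (hf : Function.Surjective f)
    {A B : Subgroup X} [hA : A.Normal] [hB : B.Normal] (hAB : A ≤ B) (hker : f.ker ≤ A) :
    (map f A).relIndex (map f B) = A.relIndex B := by
  haveI : (map f A).Normal := hA.map f hf
  haveI : ((map f A).subgroupOf (map f B)).Normal := Subgroup.normal_subgroupOf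
  haveI : (A.subgroupOf B).Normal := Subgroup.normal_subgroupOf
  set g := f.subgroupMap B with hg
  have hle : A.subgroupOf B ≤ comap g ((map f A).subgroupOf (map f B)) := by
    intro x hx
    have : (g x : Y) ∈ map f A := ⟨(x : X), hx, rfl⟩
    exact this
  have hle2 : comap g ((map f A).subgroupOf (map f B)) ≤ A.subgroupOf B := by
    intro x hx
    have hx' : (f (x : X)) ∈ map f A := hx
    obtain ⟨a, ha, hfa⟩ := hx'
    have : a⁻¹ * (x : X) ∈ f.ker := by
      rw [MonoidHom.mem_ker, map_mul, map_inv, hfa, inv_mul_cancel]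
    have hmem : (x : X) ∈ A := by
      have := mul_mem ha (hker this)
      simpa using this
    exact hmem
  have hsurj := surjective_quotientMap g hle (MonoidHom.subgroupMap_surjective f B)
  have hinj := injective_quotientMap g hle hle2
  rw [relindex_eq_card, relindex_eq_card]
  exact (Nat.card_congr (Equiv.ofBijective _ ⟨hinj, hsurj⟩)).symm

/-- Second isomorphism theorem form: for `A` normal, `relindex A (H ⊔ A) = relindex A H`. -/
theorem relindex_sup_right (A H : Subgroup X) (hA : A.Normal) :
    A.relIndex (H ⊔ A) = A.relIndex H := by
  haveI := hA
  rw [relindex_eq_card, relindex_eq_card]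
  exact (Nat.card_congr (QuotientGroup.quotientInfEquivProdNormalQuotient H A).toEquiv).symm

theorem subgroupOf_inf_left {A B M : Subgroup X} (h : B ≤ M) :
    (A ⊓ M).subgroupOf B = A.subgroupOf B := by
  ext x
  simp only [mem_subgroupOf, Subgroup.mem_inf]
  exact ⟨fun hx => hx.1, fun hx => ⟨hx, h x.2⟩⟩

/-- Dedekind modular law, one side: if `A ≤ B` and `N` is normal, `(A ⊔ N) ⊓ B = A ⊔ (N ⊓ B)`. -/
theorem dedekind_inf {A N B : Subgroup X} [N.Normal] (hAB : A ≤ B) :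
    (A ⊔ N) ⊓ B = A ⊔ (N ⊓ B) := by
  apply le_antisymm
  · rintro x ⟨hx1, hxB⟩
    have hx1' : x ∈ (A : Set X) * (N : Set X) := by rw [← Subgroup.mul_normal A N]; exact hx1
    obtain ⟨a, ha, n, hn, rfl⟩ := hx1'
    have hnB : n ∈ B := by
      have : a⁻¹ * (a * n) ∈ B := mul_mem (inv_mem (hAB ha)) hxB
      simpa using this
    exact mul_mem (le_sup_left (a := A) (b := N ⊓ B) ha)
      (le_sup_right (a := A) (b := N ⊓ B) (⟨hn, hnB⟩ : n ∈ N ⊓ B))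
  · exact sup_le (le_inf le_sup_left hAB) (le_inf (le_trans inf_le_left le_sup_right) inf_le_right)

/-- Dedekind modular law, other form: if `N ≤ K` and `N` is normal, `K ⊓ (B ⊔ N) = (K ⊓ B) ⊔ N`. -/
theorem dedekind_inf' {K N B : Subgroup X} [N.Normal] (hNK : N ≤ K) :
    K ⊓ (B ⊔ N) = (K ⊓ B) ⊔ N := by
  apply le_antisymm
  · rintro x ⟨hxK, hx2⟩
    have hx2' : x ∈ (B : Set X) * (N : Set X) := by rw [← Subgroup.mul_normal B N]; exact hx2
    obtain ⟨b, hb, n, hn, rfl⟩ := hx2'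
    have hbK : b ∈ K := by
      have : (b * n) * n⁻¹ ∈ K := mul_mem hxK (inv_mem (hNK hn))
      simpa using this
    exact mul_mem (le_sup_left (a := K ⊓ B) (b := N) (⟨hbK, hb⟩ : b ∈ K ⊓ B))
      (le_sup_right (a := K ⊓ B) (b := N) hn)
  · exact sup_le (le_inf inf_le_left (le_trans inf_le_right le_sup_left))
      (le_inf hNK le_sup_right)



variable {p : ℕ} {X Y : Type u} [Group X] [Group Y]

theorem isPSolvable_of_subsingleton [Subsingleton X] : IsPSolvableGrp p X := by
  refine ⟨⟨0, fun _ => ⊥, monotone_const, rfl, ?_, fun _ => inferInstance⟩, fun i => i.elim0⟩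
  ext x
  simp [Subsingleton.elim x 1]

theorem relindex_map_dvd_of_surjective [Finite X] (f : X →* Y) (hf : Function.Surjective f)
    {A B : Subgroup X} [hA : A.Normal] [hB : B.Normal] (hAB : A ≤ B) :
    (Subgroup.map f A).relIndex (Subgroup.map f B) ∣ A.relIndex B := by
  haveI : (Subgroup.map f A).Normal := hA.map f hf
  haveI : ((Subgroup.map f A).subgroupOf (Subgroup.map f B)).Normal := Subgroup.normal_subgroupOf
  haveI : (A.subgroupOf B).Normal := Subgroup.normal_subgroupOf
  set g := f.subgroupMap B with hg
  have hle : A.subgroupOf B ≤ Subgroup.comap g ((Subgroup.map f A).subgroupOf (Subgroup.map f B)) := by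
    intro x hx
    have : (g x : Y) ∈ Subgroup.map f A := ⟨(x : X), hx, rfl⟩
    exact this
  have hsurj := surjective_quotientMap g hle (MonoidHom.subgroupMap_surjective f B)
  rw [relindex_eq_card, relindex_eq_card]
  exact card_dvd_of_surjective' _ hsurj

theorem relindex_subgroupOf_dvd [Finite X] (H : Subgroup X)
    {A B : Subgroup X} [hA : A.Normal] [hB : B.Normal] (hAB : A ≤ B) :
    ((A.subgroupOf H).subgroupOf (B.subgroupOf H)).index ∣ A.relIndex B := by
  haveI : (A.subgroupOf B).Normal := Subgroup.normal_subgroupOf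
  haveI : (A.subgroupOf H).Normal := Subgroup.normal_subgroupOf
  haveI : ((A.subgroupOf H).subgroupOf (B.subgroupOf H)).Normal := Subgroup.normal_subgroupOf
  set g : ↥(B.subgroupOf H) →* ↥B :=
    { toFun := fun x => ⟨((x : ↥H) : X), x.2⟩
      map_one' := rfl
      map_mul' := fun _ _ => rfl } with hg
  have hle : (A.subgroupOf H).subgroupOf (B.subgroupOf H) ≤ Subgroup.comap g (A.subgroupOf B) := by
    intro x hx; exact hx
  have hle2 : Subgroup.comap g (A.subgroupOf B) ≤ (A.subgroupOf H).subgroupOf (B.subgroupOf H) := by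
    intro x hx; exact hx
  have hinj := injective_quotientMap g hle hle2
  rw [relindex_eq_card]
  rw [show ((A.subgroupOf H).subgroupOf (B.subgroupOf H)).index
      = Nat.card (↥(B.subgroupOf H) ⧸ (A.subgroupOf H).subgroupOf (B.subgroupOf H)) from rfl]
  exact card_dvd_of_injective' _ hinj

theorem dvd_transfer (hp : p.Prime) {d d' : ℕ} (hdvd : d' ∣ d)
    (h : (∃ k, d = p ^ k) ∨ ¬ p ∣ d) : (∃ k, d' = p ^ k) ∨ ¬ p ∣ d' := by
  rcases h with ⟨k, rfl⟩ | h
  · left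
    obtain ⟨j, _, rfl⟩ := (Nat.dvd_prime_pow hp).mp hdvd
    exact ⟨j, rfl⟩
  · right
    exact fun hpd => h (hpd.trans hdvd)

theorem isPSolvable_of_surjective [Finite X] (hp : p.Prime) (f : X →* Y)
    (hf : Function.Surjective f) (h : IsPSolvableGrp p X) : IsPSolvableGrp p Y := by
  obtain ⟨S, hS⟩ := h
  refine ⟨⟨S.len, fun i => Subgroup.map f (S.ser i), fun i j hij => Subgroup.map_mono (S.mono hij),
      by show Subgroup.map f (S.ser 0) = ⊥; rw [S.bot_eq]; exact Subgroup.map_bot f,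
      by show Subgroup.map f (S.ser (Fin.last S.len)) = ⊤; rw [S.top_eq]; exact Subgroup.map_top_of_surjective f hf,
      fun i => (S.normal i).map f hf⟩, ?_⟩
  intro i
  haveI := S.normal i.castSucc
  haveI := S.normal i.succ
  exact dvd_transfer hp (relindex_map_dvd_of_surjective f hf (S.mono (Fin.castSucc_le_succ i))) (hS i)

theorem isPSolvable_subgroup [Finite X] (hp : p.Prime) (h : IsPSolvableGrp p X)
    (H : Subgroup X) : IsPSolvableGrp p ↥H := by
  obtain ⟨S, hS⟩ := h
  refine ⟨⟨S.len, fun i => (S.ser i).subgroupOf H,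
      fun i j hij => Subgroup.comap_mono (S.mono hij),
      by show (S.ser 0).subgroupOf H = ⊥; rw [S.bot_eq]; exact Subgroup.bot_subgroupOf H,
      by show (S.ser (Fin.last S.len)).subgroupOf H = ⊤; rw [S.top_eq]; exact Subgroup.top_subgroupOf H,
      fun i => (S.normal i).subgroupOf H⟩, ?_⟩
  intro i
  haveI := S.normal i.castSucc
  haveI := S.normal i.succ
  exact dvd_transfer hp (relindex_subgroupOf_dvd H (S.mono (Fin.castSucc_le_succ i))) (hS i)


variable {p : ℕ} {X Y : Type u} [Group X] [Group Y]

theorem subgroupOf_congr {U V B : Subgroup X} (h : U ⊓ B = V ⊓ B) :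
    U.subgroupOf B = V.subgroupOf B := by
  ext x
  simp only [Subgroup.mem_subgroupOf]
  constructor
  · intro hU
    exact (h ▸ (Subgroup.mem_inf.mpr ⟨hU, x.2⟩) : (x : X) ∈ V ⊓ B).1
  · intro hV
    exact (h.symm ▸ (Subgroup.mem_inf.mpr ⟨hV, x.2⟩) : (x : X) ∈ U ⊓ B).1

theorem relindex_congr_left {U V B : Subgroup X} (h : U ⊓ B = V ⊓ B) :
    U.relIndex B = V.relIndex B := by
  show (U.subgroupOf B).index = (V.subgroupOf B).index
  rw [subgroupOf_congr h]

theorem inf_normal {A K : Subgroup X} (hA : A.Normal) (hK : K.Normal) : (A ⊓ K).Normal :=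
  ⟨fun n hn g => ⟨hA.conj_mem n hn.1 g, hK.conj_mem n hn.2 g⟩⟩

/-- Translation lemma: a chief factor `A < B` with `N ⊓ B ≤ A` translates to the chief
factor `A ⊔ N < B ⊔ N` of the same index. -/
theorem chief_sup {A B N : Subgroup X} [hN : N.Normal] (hc : IsChiefFactorOf X A B)
    (hBN : N ⊓ B ≤ A) :
    IsChiefFactorOf X (A ⊔ N) (B ⊔ N) ∧ (A ⊔ N).relIndex (B ⊔ N) = A.relIndex B := by
  obtain ⟨hA, hB, hlt, hmax⟩ := hc
  haveI := hA; haveI := hB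
  have hAB : A ≤ B := hlt.le
  have key : (A ⊔ N) ⊓ B = A := by
    rw [dedekind_inf hAB]
    exact sup_eq_left.mpr hBN
  have hne : A ⊔ N ≠ B ⊔ N := by
    intro hEq
    have h1 : B ≤ (A ⊔ N) ⊓ B := le_inf (hEq ▸ le_sup_left) le_rfl
    rw [key] at h1
    exact hlt.ne (le_antisymm hAB h1)
  haveI : (A ⊔ N).Normal := Subgroup.sup_normal A N
  haveI : (B ⊔ N).Normal := Subgroup.sup_normal B N
  refine ⟨⟨‹_›, ‹_›, lt_of_le_of_ne (sup_le_sup_right hAB N) hne, ?_⟩, ?_⟩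
  · intro K hK hK1 hK2
    have hNK : N ≤ K := le_trans le_sup_right hK1
    have hKdec : K = (K ⊓ B) ⊔ N := by
      rw [← dedekind_inf' hNK]
      exact (inf_eq_left.mpr hK2).symm
    rcases hmax (K ⊓ B) (inf_normal hK hB) (le_inf (le_trans le_sup_left hK1) hAB)
        inf_le_right with h | h
    · left; rw [hKdec, h]
    · right; rw [hKdec, h]
  · calc (A ⊔ N).relIndex (B ⊔ N)
        = (A ⊔ N).relIndex (B ⊔ (A ⊔ N)) := by
          congr 1
          rw [← sup_assoc, sup_eq_left.mpr hAB]
      _ = (A ⊔ N).relIndex B := relindex_sup_right (A ⊔ N) B ‹_›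
      _ = A.relIndex B := relindex_congr_left (by rw [key]; exact (inf_eq_left.mpr hAB).symm)

/-- Chiefification lemma: if `A < B` is chief and `A ⊔ (B ⊓ K) = B` then
`A ⊓ K < B ⊓ K` is chief of the same index. -/
theorem chief_inf {A B K : Subgroup X} [hK : K.Normal] (hc : IsChiefFactorOf X A B)
    (hsup : A ⊔ (B ⊓ K) = B) :
    IsChiefFactorOf X (A ⊓ K) (B ⊓ K) ∧ (A ⊓ K).relIndex (B ⊓ K) = A.relIndex B := by
  obtain ⟨hA, hB, hlt, hmax⟩ := hc
  haveI := hA; haveI := hB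
  have hAB : A ≤ B := hlt.le
  have hlt' : A ⊓ K < B ⊓ K := by
    refine lt_of_le_of_ne (inf_le_inf_right K hAB) fun hEq => ?_
    have h2 : B ⊓ K ≤ A := hEq ▸ inf_le_left
    have h3 : B ≤ A := by
      conv_lhs => rw [← hsup]
      exact sup_le le_rfl h2
    exact hlt.ne (le_antisymm hAB h3)
  refine ⟨⟨inf_normal hA hK, inf_normal hB hK, hlt', ?_⟩, ?_⟩
  · intro E hE h1 h2
    haveI := hE
    rcases hmax (A ⊔ E) (Subgroup.sup_normal A E) le_sup_left
        (sup_le hAB (le_trans h2 inf_le_left)) with h | h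
    · left
      have hEA : E ≤ A := le_trans le_sup_right (le_of_eq h)
      exact le_antisymm (le_inf hEA (le_trans h2 inf_le_right)) h1
    · right
      apply le_antisymm h2
      intro x hx
      have hxAE : x ∈ A ⊔ E := h ▸ hx.1
      have hx' : x ∈ (A : Set X) * (E : Set X) := by
        rw [← Subgroup.mul_normal A E]; exact hxAE
      obtain ⟨a, ha, e, he, rfl⟩ := hx'
      have haK : a ∈ K := by
        have h5 : (a * e) * e⁻¹ ∈ K := mul_mem hx.2 (inv_mem (le_trans h2 inf_le_right he))
        simpa using h5
      exact mul_mem (h1 ⟨ha, haK⟩) he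
  · have h1 : A.relIndex (B ⊓ K) = A.relIndex B := by
      conv_rhs => rw [← hsup, sup_comm]
      exact (relindex_sup_right A (B ⊓ K) hA).symm
    have h2 : (A ⊓ K).relIndex (B ⊓ K) = A.relIndex (B ⊓ K) := by
      apply relindex_congr_left
      rw [inf_eq_left.mpr (inf_le_inf_right K hAB)]
      rw [show A ⊓ (B ⊓ K) = (A ⊓ B) ⊓ K from (inf_assoc A B K).symm, inf_eq_left.mpr hAB]
    rw [h2, h1]

theorem chief_comap_of_surjective (f : X →* Y) (hf : Function.Surjective f)
    {A' B' : Subgroup Y} (hc : IsChiefFactorOf Y A' B') :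
    IsChiefFactorOf X (Subgroup.comap f A') (Subgroup.comap f B') ∧
      (Subgroup.comap f A').relIndex (Subgroup.comap f B') = A'.relIndex B' := by
  obtain ⟨hA, hB, hlt, hmax⟩ := hc
  haveI := hA; haveI := hB
  haveI : (Subgroup.comap f A').Normal := hA.comap f
  haveI : (Subgroup.comap f B').Normal := hB.comap f
  have hrange : f.range = ⊤ := MonoidHom.range_eq_top_of_surjective f hf
  have hker : f.ker ≤ Subgroup.comap f A' := by
    intro x hx
    have : f x = 1 := hx
    show f x ∈ A'
    rw [this]; exact one_mem A'
  have hmapA : Subgroup.map f (Subgroup.comap f A') = A' := by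
    rw [Subgroup.map_comap_eq, hrange, top_inf_eq]
  have hmapB : Subgroup.map f (Subgroup.comap f B') = B' := by
    rw [Subgroup.map_comap_eq, hrange, top_inf_eq]
  refine ⟨⟨‹_›, ‹_›, ?_, ?_⟩, ?_⟩
  · refine lt_of_le_of_ne (Subgroup.comap_mono hlt.le) fun hEq => ?_
    exact hlt.ne (Subgroup.comap_injective hf hEq)
  · intro K hK h1 h2
    haveI := hK
    have hKer : f.ker ≤ K := le_trans hker h1
    have hcm : Subgroup.comap f (Subgroup.map f K) = K := by
      rw [Subgroup.comap_map_eq, sup_eq_left.mpr hKer]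
    rcases hmax (Subgroup.map f K) (hK.map f hf)
        (by rw [← hmapA]; exact Subgroup.map_mono h1)
        (by rw [← hmapB]; exact Subgroup.map_mono h2) with h | h
    · left; rw [← hcm, h]
    · right; rw [← hcm, h]
  · have := relindex_map_of_surjective f hf (Subgroup.comap_mono hlt.le) hker
    rw [hmapA, hmapB] at this
    exact this.symm

theorem chief_map_of_surjective (f : X →* Y) (hf : Function.Surjective f)
    {A B : Subgroup X} (hc : IsChiefFactorOf X A B) (hker : f.ker ≤ A) :
    IsChiefFactorOf Y (Subgroup.map f A) (Subgroup.map f B) ∧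
      (Subgroup.map f A).relIndex (Subgroup.map f B) = A.relIndex B := by
  obtain ⟨hA, hB, hlt, hmax⟩ := hc
  haveI := hA; haveI := hB
  have hAB : A ≤ B := hlt.le
  have hrange : f.range = ⊤ := MonoidHom.range_eq_top_of_surjective f hf
  have hcmA : Subgroup.comap f (Subgroup.map f A) = A := by
    rw [Subgroup.comap_map_eq, sup_eq_left.mpr hker]
  have hcmB : Subgroup.comap f (Subgroup.map f B) = B := by
    rw [Subgroup.comap_map_eq, sup_eq_left.mpr (le_trans hker hAB)]
  haveI : (Subgroup.map f A).Normal := hA.map f hf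
  haveI : (Subgroup.map f B).Normal := hB.map f hf
  refine ⟨⟨‹_›, ‹_›, ?_, ?_⟩, relindex_map_of_surjective f hf hAB hker⟩
  · refine lt_of_le_of_ne (Subgroup.map_mono hAB) fun hEq => ?_
    have : A = B := by rw [← hcmA, ← hcmB, hEq]
    exact hlt.ne this
  · intro K' hK' h1 h2
    haveI := hK'
    rcases hmax (Subgroup.comap f K') (hK'.comap f)
        (by rw [← hcmA]; exact Subgroup.comap_mono h1)
        (by rw [← hcmB]; exact Subgroup.comap_mono h2) with h | h
    · left
      have hmc : Subgroup.map f (Subgroup.comap f K') = K' := by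
        rw [Subgroup.map_comap_eq, hrange, top_inf_eq]
      rw [← hmc, h]
    · right
      have hmc : Subgroup.map f (Subgroup.comap f K') = K' := by
        rw [Subgroup.map_comap_eq, hrange, top_inf_eq]
      rw [← hmc, h]

theorem pss_of_surjective [Finite X] (hp : p.Prime) (f : X →* Y) (hf : Function.Surjective f)
    (h : IsPSupersolvableGrp p X) : IsPSupersolvableGrp p Y := by
  refine ⟨isPSolvable_of_surjective hp f hf h.1, fun N M hc hdvd => ?_⟩
  obtain ⟨hchief, hrel⟩ := chief_comap_of_surjective f hf hc
  rw [← hrel] at hdvd ⊢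
  exact h.2 _ _ hchief hdvd

theorem pss_of_subsingleton [Subsingleton X] : IsPSupersolvableGrp p X := by
  refine ⟨isPSolvable_of_subsingleton, fun N M hc _ => ?_⟩
  have : N = M := Subgroup.ext fun x => by
    have : x = 1 := Subsingleton.elim x 1
    simp [this, one_mem]
  exact absurd hc.2.2.1 (by rw [this]; exact lt_irrefl M)

section Residual

variable {p : ℕ} {X Y : Type u} [Group X] [Group Y]

theorem qic_top : QuotientInClass (pSupersolvableClass p) (⊤ : Subgroup X) := by
  refine ⟨inferInstance, ?_⟩
  haveI : Subsingleton (X ⧸ (⊤ : Subgroup X)) := QuotientGroup.subsingleton_quotient_top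
  exact pss_of_subsingleton

theorem qic_inf [Finite X] (hp : p.Prime) (hX : IsPSolvableGrp p X) {K₁ K₂ : Subgroup X}
    (h1 : QuotientInClass (pSupersolvableClass p) K₁)
    (h2 : QuotientInClass (pSupersolvableClass p) K₂) :
    QuotientInClass (pSupersolvableClass p) (K₁ ⊓ K₂) := by
  obtain ⟨hn1, hc1⟩ := h1
  obtain ⟨hn2, hc2⟩ := h2
  haveI := hn1; haveI := hn2
  haveI h12n : (K₁ ⊓ K₂).Normal := inf_normal hn1 hn2
  refine ⟨h12n, ?_, ?_⟩
  · exact isPSolvable_of_surjective hp (QuotientGroup.mk' _) (QuotientGroup.mk'_surjective _) hX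
  · intro NN MM hc hdvd
    have hsurj := QuotientGroup.mk'_surjective (K₁ ⊓ K₂)
    obtain ⟨hchief, hrel⟩ := chief_comap_of_surjective _ hsurj hc
    set A := Subgroup.comap (QuotientGroup.mk' (K₁ ⊓ K₂)) NN with hA
    set B := Subgroup.comap (QuotientGroup.mk' (K₁ ⊓ K₂)) MM with hB
    have h12 : K₁ ⊓ K₂ ≤ A := by
      intro x hx
      show QuotientGroup.mk' _ x ∈ NN
      have : QuotientGroup.mk' (K₁ ⊓ K₂) x = 1 := (QuotientGroup.eq_one_iff x).mpr hx
      rw [this]; exact one_mem NN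
    haveI hAn := hchief.1
    haveI hBn := hchief.2.1
    have hABle : A ≤ B := hchief.2.2.1.le
    rw [← hrel] at hdvd
    rw [← hrel]
    haveI : (B ⊓ K₁).Normal := inf_normal hBn hn1
    rcases hchief.2.2.2 (A ⊔ (B ⊓ K₁)) (Subgroup.sup_normal A (B ⊓ K₁)) le_sup_left
        (sup_le hABle inf_le_left) with hTA | hTB
    · -- B ⊓ K₁ ≤ A : translate up by K₁ and use X ⧸ K₁
      have hK1B : K₁ ⊓ B ≤ A := by
        rw [inf_comm]; exact le_trans le_sup_right (le_of_eq hTA)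
      obtain ⟨hc', hrel'⟩ := chief_sup (N := K₁) hchief hK1B
      have hker1 : (QuotientGroup.mk' K₁).ker ≤ A ⊔ K₁ := by
        rw [QuotientGroup.ker_mk']; exact le_sup_right
      obtain ⟨hc'', hrel''⟩ := chief_map_of_surjective (QuotientGroup.mk' K₁)
        (QuotientGroup.mk'_surjective K₁) hc' hker1
      have hfinal := hc1.2 _ _ hc'' (by rw [hrel'', hrel']; exact hdvd)
      rw [hrel'', hrel'] at hfinal
      exact hfinal
    · -- A ⊔ (B ⊓ K₁) = B : chiefify down to K₁ then translate up by K₂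
      obtain ⟨hcI, hrelI⟩ := chief_inf (K := K₁) hchief hTB
      have hsub : K₂ ⊓ (B ⊓ K₁) ≤ A ⊓ K₁ := by
        intro x hx
        exact ⟨h12 ⟨hx.2.2, hx.1⟩, hx.2.2⟩
      obtain ⟨hc2', hrel2'⟩ := chief_sup (N := K₂) hcI hsub
      have hker2 : (QuotientGroup.mk' K₂).ker ≤ (A ⊓ K₁) ⊔ K₂ := by
        rw [QuotientGroup.ker_mk']; exact le_sup_right
      obtain ⟨hc2'', hrel2''⟩ := chief_map_of_surjective (QuotientGroup.mk' K₂)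
        (QuotientGroup.mk'_surjective K₂) hc2' hker2
      have hfinal := hc2.2 _ _ hc2'' (by rw [hrel2'', hrel2', hrelI]; exact hdvd)
      rw [hrel2'', hrel2', hrelI] at hfinal
      exact hfinal

theorem groupResidual_normal : (groupResidual (pSupersolvableClass p) X).Normal := by
  constructor
  intro n hn g
  have hn' : ∀ N ∈ {N : Subgroup X | QuotientInClass (pSupersolvableClass p) N}, n ∈ N :=
    Subgroup.mem_sInf.mp hn
  show g * n * g⁻¹ ∈ sInf {N : Subgroup X | QuotientInClass (pSupersolvableClass p) N}
  rw [Subgroup.mem_sInf]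
  intro N hN
  obtain ⟨hNorm, -⟩ := id hN
  exact hNorm.conj_mem n (hn' N hN) g

theorem qic_residual [Finite X] (hp : p.Prime) (hX : IsPSolvableGrp p X) :
    QuotientInClass (pSupersolvableClass p) (groupResidual (pSupersolvableClass p) X) := by
  classical
  have hne : {N : Subgroup X | QuotientInClass (pSupersolvableClass p) N}.Nonempty := ⟨⊤, qic_top⟩
  obtain ⟨K₀, hK₀S, hmin⟩ := Set.Finite.exists_minimalFor id
    {N : Subgroup X | QuotientInClass (pSupersolvableClass p) N} (Set.toFinite _) hne
  have hres : groupResidual (pSupersolvableClass p) X = K₀ := by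
    apply le_antisymm (sInf_le hK₀S)
    apply le_sInf
    intro N hN
    have hinf := qic_inf hp hX hK₀S hN
    have heq := hmin hinf inf_le_left
    exact le_trans heq inf_le_right
  rw [hres]; exact hK₀S

theorem residual_eq_bot_of_pss [Finite X] (hp : p.Prime) (h : IsPSupersolvableGrp p X) :
    groupResidual (pSupersolvableClass p) X = ⊥ := by
  apply le_bot_iff.mp
  apply sInf_le
  refine ⟨inferInstance, ?_⟩
  haveI : Finite (X ⧸ (⊥ : Subgroup X)) := Quotient.finite _
  exact pss_of_surjective hp (QuotientGroup.quotientBot (G := X)).symm.toMonoidHom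
    (MulEquiv.surjective _) h

theorem pss_of_residual_eq_bot [Finite X] (hp : p.Prime) (hX : IsPSolvableGrp p X)
    (h : groupResidual (pSupersolvableClass p) X = ⊥) : IsPSupersolvableGrp p X := by
  have hq : QuotientInClass (pSupersolvableClass p) (⊥ : Subgroup X) := h ▸ qic_residual hp hX
  obtain ⟨hno2, hq2⟩ := hq
  haveI : Finite (X ⧸ (⊥ : Subgroup X)) := Quotient.finite _
  exact pss_of_surjective hp (QuotientGroup.quotientBot (G := X)).toMonoidHom
    (MulEquiv.surjective _) hq2

theorem residual_map_le [Finite X] (hp : p.Prime) (f : X →* Y) (hf : Function.Surjective f) :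
    Subgroup.map f (groupResidual (pSupersolvableClass p) X)
      ≤ groupResidual (pSupersolvableClass p) Y := by
  haveI : Finite Y := Finite.of_surjective f hf
  apply le_sInf
  intro N' hN'
  obtain ⟨hn', hC'⟩ := hN'
  haveI := hn'
  have hqic : QuotientInClass (pSupersolvableClass p) (Subgroup.comap f N') := by
    refine ⟨hn'.comap f, ?_⟩
    have hsurj2 : Function.Surjective ((QuotientGroup.mk' N').comp f) :=
      (QuotientGroup.mk'_surjective N').comp hf
    have hker : ((QuotientGroup.mk' N').comp f).ker = Subgroup.comap f N' := by
      ext x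
      simp only [MonoidHom.mem_ker, MonoidHom.comp_apply, Subgroup.mem_comap]
      rw [show (QuotientGroup.mk' N') (f x) = 1 ↔ f x ∈ N' from QuotientGroup.eq_one_iff (f x)]
    have e := QuotientGroup.quotientKerEquivOfSurjective _ hsurj2
    haveI : (Subgroup.comap f N').Normal := hn'.comap f
    have e2 := QuotientGroup.quotientMulEquivOfEq hker
    haveI : Finite (Y ⧸ N') := Quotient.finite _
    exact pss_of_surjective hp (e2.toMonoidHom.comp e.symm.toMonoidHom)
      ((MulEquiv.surjective e2).comp (MulEquiv.surjective e.symm)) hC'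
  calc Subgroup.map f (groupResidual (pSupersolvableClass p) X)
      ≤ Subgroup.map f (Subgroup.comap f N') := Subgroup.map_mono (sInf_le hqic)
    _ ≤ N' := Subgroup.map_comap_le f N'

theorem qic_map [Finite X] (hp : p.Prime) (hX : IsPSolvableGrp p X)
    (f : X →* Y) (hf : Function.Surjective f) :
    QuotientInClass (pSupersolvableClass p)
      (Subgroup.map f (groupResidual (pSupersolvableClass p) X)) := by
  haveI : Finite Y := Finite.of_surjective f hf
  haveI hrn : (groupResidual (pSupersolvableClass p) X).Normal := groupResidual_normal
  haveI : (Subgroup.map f (groupResidual (pSupersolvableClass p) X)).Normal := hrn.map f hf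
  refine ⟨‹_›, ?_⟩
  obtain ⟨hno, hCres⟩ := qic_residual hp hX
  have hle : groupResidual (pSupersolvableClass p) X
      ≤ Subgroup.comap f (Subgroup.map f (groupResidual (pSupersolvableClass p) X)) :=
    Subgroup.le_comap_map f _
  have gsurj := surjective_quotientMap f hle hf
  haveI : Finite (X ⧸ groupResidual (pSupersolvableClass p) X) := Quotient.finite _
  exact pss_of_surjective hp _ gsurj hCres

theorem residual_map_eq [Finite X] (hp : p.Prime) (hX : IsPSolvableGrp p X)
    (f : X →* Y) (hf : Function.Surjective f) :
    Subgroup.map f (groupResidual (pSupersolvableClass p) X)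
      = groupResidual (pSupersolvableClass p) Y :=
  le_antisymm (residual_map_le hp f hf) (sInf_le (qic_map hp hX f hf))

end Residual

section LemmaB

variable {p : ℕ} {X Y : Type u} [Group X] [Group Y]

/-- Lemma B: if `K` is a normal `p'`-subgroup and `X/K` is `p`-supersolvable, then so is `X`. -/
theorem pss_of_quotient_p' [Finite X] (hp : p.Prime) (hX : IsPSolvableGrp p X)
    {K : Subgroup X} (hKn : K.Normal) (hK : ¬ p ∣ Nat.card K)
    (hQ : IsPSupersolvableGrp p (X ⧸ K)) : IsPSupersolvableGrp p X := by
  haveI := hKn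
  refine ⟨hX, fun A B hc hdvd => ?_⟩
  haveI hAn := hc.1; haveI hBn := hc.2.1
  haveI : (B ⊓ K).Normal := inf_normal hBn hKn
  rcases hc.2.2.2 (A ⊔ (B ⊓ K)) (Subgroup.sup_normal A (B ⊓ K)) le_sup_left
      (sup_le hc.2.2.1.le inf_le_left) with hTA | hTB
  · have hKB : K ⊓ B ≤ A := by
      rw [inf_comm]; exact le_trans le_sup_right (le_of_eq hTA)
    obtain ⟨hc', hrel'⟩ := chief_sup (N := K) hc hKB
    have hker : (QuotientGroup.mk' K).ker ≤ A ⊔ K := by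
      rw [QuotientGroup.ker_mk']; exact le_sup_right
    obtain ⟨hc'', hrel''⟩ := chief_map_of_surjective (QuotientGroup.mk' K)
      (QuotientGroup.mk'_surjective K) hc' hker
    have hfin := hQ.2 _ _ hc'' (by rw [hrel'', hrel']; exact hdvd)
    rw [hrel'', hrel'] at hfin
    exact hfin
  · exfalso
    obtain ⟨hcI, hrelI⟩ := chief_inf (K := K) hc hTB
    apply hK
    have h1 : (A ⊓ K).relIndex (B ⊓ K) ∣ Nat.card ↥(B ⊓ K) := by
      rw [relindex_eq_card]
      exact ⟨_, Subgroup.card_eq_card_quotient_mul_card_subgroup ((A ⊓ K).subgroupOf (B ⊓ K))⟩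
    have h2 : Nat.card ↥(B ⊓ K) ∣ Nat.card ↥K := Subgroup.card_dvd_of_le inf_le_right
    calc p ∣ A.relIndex B := hdvd
      _ = (A ⊓ K).relIndex (B ⊓ K) := hrelI.symm
      _ ∣ Nat.card K := h1.trans h2

theorem exists_minimal_normal [Finite X] {K : Subgroup X} (hKn : K.Normal) (hK : K ≠ ⊥) :
    ∃ N : Subgroup X, N.Normal ∧ N ≠ ⊥ ∧ N ≤ K ∧
      ∀ L : Subgroup X, L.Normal → L ≠ ⊥ → L ≤ N → L = N := by
  obtain ⟨N, hNs, hmin⟩ := Set.Finite.exists_minimalFor id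
    {L : Subgroup X | L.Normal ∧ L ≠ ⊥ ∧ L ≤ K} (Set.toFinite _) ⟨K, hKn, hK, le_rfl⟩
  exact ⟨N, hNs.1, hNs.2.1, hNs.2.2, fun L hL1 hL2 hL3 =>
    le_antisymm hL3 (hmin ⟨hL1, hL2, le_trans hL3 hNs.2.2⟩ hL3)⟩

theorem exists_le_maximal [Finite X] {H : Subgroup X} (hH : H ≠ ⊤) :
    ∃ M : Subgroup X, H ≤ M ∧ M ≠ ⊤ ∧ ∀ K : Subgroup X, M < K → K = ⊤ := by
  obtain ⟨M, hMs, hmax⟩ := Set.Finite.exists_maximalFor id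
    {L : Subgroup X | H ≤ L ∧ L ≠ ⊤} (Set.toFinite _) ⟨H, le_rfl, hH⟩
  refine ⟨M, hMs.1, hMs.2, fun K hK => ?_⟩
  by_contra hKne
  exact hK.ne (le_antisymm hK.le (hmax ⟨le_trans hMs.1 hK.le, hKne⟩ hK.le))

theorem minimal_normal_card [Finite X] (hp : p.Prime) (hX : IsPSolvableGrp p X)
    {N : Subgroup X} (hNn : N.Normal) (hNbot : N ≠ ⊥)
    (hmin : ∀ L : Subgroup X, L.Normal → L ≠ ⊥ → L ≤ N → L = N) :
    (∃ k, Nat.card N = p ^ k) ∨ ¬ p ∣ Nat.card N := by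
  obtain ⟨S, hS⟩ := hX
  have hex : ∃ i : Fin S.len, N ⊓ S.ser i.castSucc = ⊥ ∧ N ⊓ S.ser i.succ ≠ ⊥ := by
    by_contra hcon
    push_neg at hcon
    have hall : ∀ i : Fin (S.len + 1), N ⊓ S.ser i = ⊥ := by
      intro i
      induction i using Fin.induction with
      | zero => rw [S.bot_eq]; exact inf_bot_eq N
      | succ j ih => exact hcon j ih
    have hlast := hall (Fin.last S.len)
    rw [S.top_eq, inf_top_eq] at hlast
    exact hNbot hlast
  obtain ⟨i, hbot, hne⟩ := hex
  haveI := S.normal i.castSucc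
  haveI := S.normal i.succ
  have hNinf : N ⊓ S.ser i.succ = N :=
    hmin _ (inf_normal hNn (S.normal i.succ)) hne inf_le_left
  have hNle : N ≤ S.ser i.succ := by
    conv_lhs => rw [← hNinf]
    exact inf_le_right
  set g : ↥N →* ↥(S.ser i.succ) :=
    { toFun := fun x => ⟨(x : X), hNle x.2⟩
      map_one' := rfl
      map_mul' := fun _ _ => rfl } with hg
  haveI : ((S.ser i.castSucc).subgroupOf (S.ser i.succ)).Normal := Subgroup.normal_subgroupOf
  set q := QuotientGroup.mk' ((S.ser i.castSucc).subgroupOf (S.ser i.succ)) with hq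
  have hinj : Function.Injective (q.comp g) := by
    intro a b hab
    have hab' : ((g a : ↥(S.ser i.succ)) : ↥(S.ser i.succ) ⧸
        (S.ser i.castSucc).subgroupOf (S.ser i.succ)) = (g b : ↥(S.ser i.succ)) := hab
    rw [QuotientGroup.eq] at hab'
    have hmem1 : ((g a)⁻¹ * g b : ↥(S.ser i.succ)) ∈
        (S.ser i.castSucc).subgroupOf (S.ser i.succ) := hab'
    have hmem2 : (a : X)⁻¹ * (b : X) ∈ S.ser i.castSucc := hmem1
    have hmem3 : (a : X)⁻¹ * (b : X) ∈ N := mul_mem (inv_mem a.2) b.2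
    have : (a : X)⁻¹ * (b : X) ∈ N ⊓ S.ser i.castSucc := ⟨hmem3, hmem2⟩
    rw [hbot] at this
    have h1 : (a : X)⁻¹ * (b : X) = 1 := this
    have : (a : X) = (b : X) := by
      have := congrArg (fun z => (a : X) * z) h1
      simpa using this.symm
    exact Subtype.ext this
  have hdvd : Nat.card N ∣ S.factorCard i := card_dvd_of_injective' _ hinj
  exact dvd_transfer hp hdvd (hS i)

/-- The norm hypothesis passes to quotients. -/
theorem hyp_quotient [Finite X] (hp : p.Prime) (hX : IsPSolvableGrp p X)
    (hyp : ∀ S : Subgroup X, (Subgroup.map S.subtype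
        (groupResidual (pSupersolvableClass p) ↥S)).Normal)
    (K : Subgroup X) [K.Normal] :
    ∀ S' : Subgroup (X ⧸ K), (Subgroup.map S'.subtype
        (groupResidual (pSupersolvableClass p) ↥S')).Normal := by
  intro S'
  obtain ⟨T, rfl⟩ : ∃ T : Subgroup X, Subgroup.map (QuotientGroup.mk' K) T = S' :=
    ⟨Subgroup.comap (QuotientGroup.mk' K) S', by
      rw [Subgroup.map_comap_eq,
        MonoidHom.range_eq_top_of_surjective _ (QuotientGroup.mk'_surjective K), top_inf_eq]⟩
  set π := QuotientGroup.mk' K with hπ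
  set φ := π.subgroupMap T with hφ
  have hφs : Function.Surjective φ := MonoidHom.subgroupMap_surjective π T
  have hTsolv : IsPSolvableGrp p ↥T := isPSolvable_subgroup hp hX T
  have hres : Subgroup.map φ (groupResidual (pSupersolvableClass p) ↥T)
      = groupResidual (pSupersolvableClass p) ↥(Subgroup.map π T) :=
    residual_map_eq hp hTsolv φ hφs
  rw [← hres, Subgroup.map_map]
  have hcomp : (Subgroup.map π T).subtype.comp φ = π.comp T.subtype :=
    MonoidHom.ext fun x => rfl
  rw [hcomp, ← Subgroup.map_map]
  exact Subgroup.Normal.map (hyp T) π (QuotientGroup.mk'_surjective K)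

end LemmaB

section FinalCase

variable {p : ℕ} {X : Type u} [Group X]

theorem final_case [Finite X] (hp : p.Prime) (hsolv : IsPSolvableGrp p X)
    (hyp : ∀ S : Subgroup X, (Subgroup.map S.subtype
        (groupResidual (pSupersolvableClass p) ↥S)).Normal)
    {N : Subgroup X} (hNn : N.Normal) (hNbot : N ≠ ⊥) (hp'N : ¬ p ∣ Nat.card ↥N)
    (huniq : ∀ L : Subgroup X, L.Normal → L ≠ ⊥ → N ≤ L)
    (hNR : N ≤ groupResidual (pSupersolvableClass p) X)
    (hRbot : groupResidual (pSupersolvableClass p) X ≠ ⊥)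
    (hPGq : IsPGroup p ↥(groupResidual (pSupersolvableClass p) (X ⧸ N))) : False := by
  haveI := hNn
  haveI := Fact.mk hp
  set R := groupResidual (pSupersolvableClass p) X with hRdef
  haveI hRn : R.Normal := groupResidual_normal
  set π := QuotientGroup.mk' N with hπ
  have hπs : Function.Surjective π := QuotientGroup.mk'_surjective N
  have hmapR : Subgroup.map π R = groupResidual (pSupersolvableClass p) (X ⧸ N) :=
    residual_map_eq hp hsolv π hπs
  have hPGimg : IsPGroup p ↥(Subgroup.map π R) := by rw [hmapR]; exact hPGq
  obtain ⟨m, hm⟩ := IsPGroup.iff_card.mp hPGimg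
  set φ := π.subgroupMap R with hφ
  have hφs : Function.Surjective φ := MonoidHom.subgroupMap_surjective π R
  have hφker : φ.ker = N.subgroupOf R := by
    ext x
    simp only [MonoidHom.mem_ker, Subgroup.mem_subgroupOf]
    constructor
    · intro h
      have h2 : ((φ x : ↥(Subgroup.map π R)) : X ⧸ N) = 1 := congrArg Subtype.val h
      exact (QuotientGroup.eq_one_iff _).mp h2
    · intro h
      exact Subtype.ext ((QuotientGroup.eq_one_iff _).mpr h)
  have ecard : Nat.card (↥R ⧸ N.subgroupOf R) = p ^ m := by
    rw [← hφker, Nat.card_congr (QuotientGroup.quotientKerEquivOfSurjective φ hφs).toEquiv, hm]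
  have hcardR : Nat.card ↥R = p ^ m * Nat.card ↥N := by
    rw [Subgroup.card_eq_card_quotient_mul_card_subgroup (N.subgroupOf R), ecard,
      Nat.card_congr (Subgroup.subgroupOfEquivOfLe hNR).toEquiv]
  by_cases hRN : R = N
  · have hq := qic_residual hp hsolv
    rw [hRdef.symm.trans hRN] at hq
    obtain ⟨hn2, hCN⟩ := hq
    have hpss := pss_of_quotient_p' hp hsolv hNn hp'N hCN
    have hbot := residual_eq_bot_of_pss hp hpss
    exact hRbot hbot
  · have hne1 : p ^ m ≠ 1 := by
      intro h1
      apply hRN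
      refine (Subgroup.eq_of_le_of_card_ge hNR ?_).symm
      rw [hcardR, h1, one_mul]
    obtain ⟨Q⟩ := Sylow.nonempty (p := p) (G := ↥R)
    set P := Subgroup.map R.subtype (Q : Subgroup ↥R) with hP
    have hPle : P ≤ R := Subgroup.map_subtype_le _
    have hfact : (Nat.card ↥R).factorization p = m := by
      rw [hcardR, Nat.factorization_mul (pow_ne_zero m hp.pos.ne') Nat.card_pos.ne']
      simp [Nat.Prime.factorization_pow hp, Nat.factorization_eq_zero_of_not_dvd hp'N]
    have hcardQ : Nat.card ↥(Q : Subgroup ↥R) = p ^ m := by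
      rw [Sylow.card_eq_multiplicity Q, hfact]
    have hcardP : Nat.card ↥P = p ^ m := by
      rw [← hcardQ]
      exact (Nat.card_congr
        (Subgroup.equivMapOfInjective _ _ (Subgroup.subtype_injective R)).toEquiv).symm
    have hco : (Nat.card ↥N).Coprime (p ^ m) :=
      ((hp.coprime_iff_not_dvd.mpr hp'N).symm).pow_right m
    have hsupR : N ⊔ P = R := by
      apply Subgroup.eq_of_le_of_card_ge (sup_le hNR hPle)
      have hd1 : Nat.card ↥N ∣ Nat.card ↥(N ⊔ P) := Subgroup.card_dvd_of_le le_sup_left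
      have hd2 : Nat.card ↥P ∣ Nat.card ↥(N ⊔ P) := Subgroup.card_dvd_of_le le_sup_right
      have hd : Nat.card ↥N * p ^ m ∣ Nat.card ↥(N ⊔ P) :=
        hco.mul_dvd_of_dvd_of_dvd hd1 (hcardP ▸ hd2)
      calc Nat.card ↥R = Nat.card ↥N * p ^ m := by rw [hcardR, Nat.mul_comm]
        _ ≤ Nat.card ↥(N ⊔ P) := Nat.le_of_dvd Nat.card_pos hd
    have hfrat := Sylow.normalizer_sup_eq_top (N := R) Q
    have htop : N ⊔ (Subgroup.normalizer (P : Set X)) = ⊤ := by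
      calc N ⊔ (Subgroup.normalizer (P : Set X)) = N ⊔ (P ⊔ (Subgroup.normalizer (P : Set X))) := by
            rw [sup_eq_right.mpr Subgroup.le_normalizer]
        _ = (N ⊔ P) ⊔ (Subgroup.normalizer (P : Set X)) := by rw [sup_assoc]
        _ = R ⊔ (Subgroup.normalizer (P : Set X)) := by rw [hsupR]
        _ = (Subgroup.normalizer (P : Set X)) ⊔ R := by rw [sup_comm]
        _ = ⊤ := hfrat
    by_cases hPnorm : (Subgroup.normalizer (P : Set X)) = ⊤
    · haveI hPn : P.Normal := Subgroup.normalizer_eq_top_iff.mp hPnorm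
      have hPbot : P ≠ ⊥ := by
        intro h
        rw [h, Subgroup.card_bot] at hcardP
        exact hne1 hcardP.symm
      have hNP := huniq P hPn hPbot
      have h1 : Nat.card ↥N ∣ p ^ m := hcardP ▸ Subgroup.card_dvd_of_le hNP
      have h2 : Nat.card ↥N ∣ 1 := by
        have h3 := Nat.dvd_gcd (dvd_refl (Nat.card ↥N)) h1
        rwa [Nat.Coprime.gcd_eq_one hco] at h3
      have h4 : N = ⊥ := by
        have h5 : Nat.card ↥N = 1 := Nat.dvd_one.mp h2
        apply Subgroup.eq_bot_of_card_eq N h5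
      exact hNbot h4
    · obtain ⟨M, hMle, hMne, hMmax⟩ := exists_le_maximal hPnorm
      have hNMtop : N ⊔ M = ⊤ := by
        apply le_antisymm le_top
        rw [← htop]
        exact sup_le_sup_left hMle N
      have hNM : ¬ N ≤ M := by
        intro h
        apply hMne
        apply le_antisymm le_top
        calc (⊤ : Subgroup X) = N ⊔ M := hNMtop.symm
          _ ≤ M := sup_le h le_rfl
      have hWn := hyp M
      have hWbot : Subgroup.map M.subtype (groupResidual (pSupersolvableClass p) ↥M) = ⊥ := by
        by_contra hh
        exact hNM (le_trans (huniq _ hWn hh) (Subgroup.map_subtype_le _))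
      have hresM : groupResidual (pSupersolvableClass p) ↥M = ⊥ :=
        (Subgroup.map_eq_bot_iff_of_injective _ (Subgroup.subtype_injective M)).mp hWbot
      have hMpss : IsPSupersolvableGrp p ↥M :=
        pss_of_residual_eq_bot hp (isPSolvable_subgroup hp hsolv M) hresM
      have hXNnot : ¬ IsPSupersolvableGrp p (X ⧸ N) := by
        intro hcontra
        have hq : QuotientInClass (pSupersolvableClass p) N := ⟨hNn, hcontra⟩
        exact hRN (le_antisymm (sInf_le hq) hNR)
      have hsolvq : IsPSolvableGrp p (X ⧸ N) := isPSolvable_of_surjective hp π hπs hsolv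
      have hbad : ∃ AA BB : Subgroup (X ⧸ N), IsChiefFactorOf (X ⧸ N) AA BB ∧
          p ∣ AA.relIndex BB ∧ AA.relIndex BB ≠ p := by
        by_contra hcon
        push_neg at hcon
        exact hXNnot ⟨hsolvq, fun AA BB hc hd => hcon AA BB hc hd⟩
      obtain ⟨AA, BB, hcq, hpd, hdne⟩ := hbad
      obtain ⟨hcX, hrelX⟩ := chief_comap_of_surjective π hπs hcq
      set A := Subgroup.comap π AA with hadef
      set B := Subgroup.comap π BB with hbdef
      have hNA : N ≤ A := by
        intro x hx
        show π x ∈ AA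
        have h0 : π x = 1 := (QuotientGroup.eq_one_iff x).mpr hx
        rw [h0]; exact one_mem AA
      haveI hAn : A.Normal := hcX.1
      haveI hBn : B.Normal := hcX.2.1
      have hABle : A ≤ B := hcX.2.2.1.le
      rw [← hrelX] at hpd hdne
      have hBdec : A ⊔ (B ⊓ M) = B := by
        apply le_antisymm (sup_le hABle inf_le_left)
        intro b hb
        have hbtop : b ∈ ((N ⊔ M : Subgroup X) : Set X) := by
          rw [hNMtop]; exact Subgroup.mem_top b
        rw [Subgroup.normal_mul] at hbtop
        obtain ⟨nn, hnn, mm, hmm, rfl⟩ := hbtop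
        have hmB : mm ∈ B := by
          have h5 : nn⁻¹ * (nn * mm) ∈ B := mul_mem (inv_mem (hABle (hNA hnn))) hb
          simpa using h5
        exact mul_mem ((le_sup_left : A ≤ A ⊔ (B ⊓ M)) (hNA hnn))
          ((le_sup_right : B ⊓ M ≤ A ⊔ (B ⊓ M)) ⟨hmB, hmm⟩)
      set A' := (A ⊓ M).subgroupOf M with ha'
      set B' := (B ⊓ M).subgroupOf M with hb'
      have hrelM : A'.relIndex B' = A.relIndex B := by
        rw [ha', hb', Subgroup.relIndex_subgroupOf inf_le_right]
        have e1 : (A ⊓ M).relIndex (B ⊓ M) = A.relIndex (B ⊓ M) :=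
          relindex_congr_left (by ext x; simp only [Subgroup.mem_inf]; tauto)
        have e2 : A.relIndex (B ⊓ M) = A.relIndex B := by
          conv_rhs => rw [← hBdec, sup_comm]
          exact (relindex_sup_right A (B ⊓ M) hAn).symm
        rw [e1, e2]
      have hA'n : A'.Normal := by
        rw [ha', subgroupOf_inf_left le_rfl]
        exact Subgroup.normal_subgroupOf
      have hB'n : B'.Normal := by
        rw [hb', subgroupOf_inf_left le_rfl]
        exact Subgroup.normal_subgroupOf
      have hABM : A ⊓ M ≤ B ⊓ M := inf_le_inf_right M hABle
      have hchiefM : IsChiefFactorOf ↥M A' B' := by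
        have hlt : A' < B' := by
          refine lt_of_le_of_ne (fun x hx => Subgroup.mem_subgroupOf.mpr
            (hABM (Subgroup.mem_subgroupOf.mp hx))) fun hEq => ?_
          have h6 : A ⊓ M = B ⊓ M := by
            have h7 := congrArg (Subgroup.map M.subtype) hEq
            rwa [ha', hb', Subgroup.subgroupOf_map_subtype, Subgroup.subgroupOf_map_subtype,
              inf_assoc, inf_idem, inf_assoc, inf_idem] at h7
          apply hcX.2.2.1.ne
          apply le_antisymm hABle
          conv_lhs => rw [← hBdec, ← h6]
          exact sup_le le_rfl inf_le_left
        refine ⟨hA'n, hB'n, hlt, ?_⟩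
        intro K' hK'n h1 h2
        set Kg := Subgroup.map M.subtype K' with hKg
        have hKgM : Kg ≤ M := Subgroup.map_subtype_le _
        have h1g : A ⊓ M ≤ Kg := by
          have h8 := Subgroup.map_mono (f := M.subtype) h1
          rwa [ha', Subgroup.subgroupOf_map_subtype, inf_assoc, inf_idem] at h8
        have h2g : Kg ≤ B ⊓ M := by
          have h8 := Subgroup.map_mono (f := M.subtype) h2
          rwa [hb', Subgroup.subgroupOf_map_subtype, inf_assoc, inf_idem] at h8
        have hKconj : ∀ mm ∈ M, ∀ kq ∈ Kg, mm * kq * mm⁻¹ ∈ Kg := by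
          intro mm hmm kq hkq
          obtain ⟨k', hk', hk'eq⟩ := hkq
          refine ⟨(⟨mm, hmm⟩ : ↥M) * k' * (⟨mm, hmm⟩ : ↥M)⁻¹, hK'n.conj_mem k' hk' ⟨mm, hmm⟩, ?_⟩
          simpa using hk'eq
        have hNle_T : N ≤ A ⊔ Kg := le_trans hNA le_sup_left
        have hNconj : ∀ g ∈ N, ∀ u ∈ A ⊔ Kg, g * u * g⁻¹ ∈ A ⊔ Kg := by
          intro g hg u hu
          have hcomm : g * u * g⁻¹ * u⁻¹ ∈ N := by
            have h8 : u * g⁻¹ * u⁻¹ ∈ N := hNn.conj_mem _ (inv_mem hg) u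
            have h9 := mul_mem hg h8
            have h10 : g * (u * g⁻¹ * u⁻¹) = g * u * g⁻¹ * u⁻¹ := by group
            rwa [h10] at h9
          have hEq : g * u * g⁻¹ = (g * u * g⁻¹ * u⁻¹) * u := by group
          rw [hEq]
          exact mul_mem (hNle_T hcomm) hu
        have hMconj : ∀ g ∈ M, ∀ u ∈ A ⊔ Kg, g * u * g⁻¹ ∈ A ⊔ Kg := by
          intro g hg u hu
          have hu' : u ∈ ((A ⊔ Kg : Subgroup X) : Set X) := hu
          rw [Subgroup.normal_mul] at hu'
          obtain ⟨a, ha, kq, hkq, rfl⟩ := hu'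
          have hsplit : g * (a * kq) * g⁻¹ = (g * a * g⁻¹) * (g * kq * g⁻¹) := by group
          rw [hsplit]
          exact mul_mem ((le_sup_left : A ≤ A ⊔ Kg) (hAn.conj_mem a ha g))
            ((le_sup_right : Kg ≤ A ⊔ Kg) (hKconj g hg kq hkq))
        have hTn : (A ⊔ Kg).Normal := by
          rw [← Subgroup.normalizer_eq_top_iff]
          apply le_antisymm le_top
          rw [← hNMtop]
          have hside : ∀ (conj : ∀ g ∈ N ⊔ M, False) , True := fun _ => trivial
          apply sup_le
          · intro g hg
            rw [Subgroup.mem_normalizer_iff]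
            intro t
            constructor
            · intro ht
              exact hNconj g hg t ht
            · intro ht
              have h10 := hNconj g⁻¹ (inv_mem hg) (g * t * g⁻¹) ht
              have h11 : g⁻¹ * (g * t * g⁻¹) * g⁻¹⁻¹ = t := by group
              rwa [h11] at h10
          · intro g hg
            rw [Subgroup.mem_normalizer_iff]
            intro t
            constructor
            · intro ht
              exact hMconj g hg t ht
            · intro ht
              have h10 := hMconj g⁻¹ (inv_mem hg) (g * t * g⁻¹) ht
              have h11 : g⁻¹ * (g * t * g⁻¹) * g⁻¹⁻¹ = t := by group
              rwa [h11] at h10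
        rcases hcX.2.2.2 (A ⊔ Kg) hTn le_sup_left
            (sup_le hABle (le_trans h2g inf_le_left)) with hTA | hTB
        · left
          have hKA : Kg ≤ A ⊓ M := le_inf (le_trans le_sup_right (le_of_eq hTA)) hKgM
          apply le_antisymm ?_ h1
          intro x hx
          have : (x : X) ∈ A ⊓ M := hKA ⟨x, hx, rfl⟩
          exact Subgroup.mem_subgroupOf.mpr this
        · right
          apply le_antisymm h2
          intro x hx
          have hxBM : (x : X) ∈ B ⊓ M := Subgroup.mem_subgroupOf.mp hx
          have hxT : (x : X) ∈ ((A ⊔ Kg : Subgroup X) : Set X) := by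
            show (x : X) ∈ (A ⊔ Kg : Subgroup X)
            rw [hTB]
            exact hxBM.1
          rw [Subgroup.normal_mul] at hxT
          obtain ⟨a, ha, kq, hkq, heq⟩ := hxT
          have haM : a ∈ M := by
            have h11 : a = (x : X) * kq⁻¹ := by rw [← heq]; group
            rw [h11]
            exact mul_mem x.2 (inv_mem (hKgM hkq))
          have hkqx : (x : X) ∈ Kg := by
            have h12 : (x : X) = a * kq := heq.symm
            rw [h12]
            exact mul_mem (h1g ⟨ha, haM⟩) hkq
          obtain ⟨k', hk', hk'eq⟩ := hkqx
          have h13 : k' = x := Subtype.ext hk'eq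
          rwa [← h13]
      have hfin := hMpss.2 A' B' hchiefM (by rw [hrelM]; exact hpd)
      rw [hrelM] at hfin
      exact hdne hfin

end FinalCase

section Main

variable {p : ℕ}

theorem subtype_pow_eq_one {X : Type u} [Group X] {H : Subgroup X} (x : ↥H) (n : ℕ)
    (h : (x : X) ^ n = 1) : x ^ n = 1 := by
  apply Subtype.ext
  rw [SubmonoidClass.coe_pow]
  simpa using h

theorem lemmaA (hp : p.Prime) (n : ℕ) :
    ∀ (X : Type u) [Group X] [Finite X], Nat.card X ≤ n → IsPSolvableGrp p X →
    (∀ S : Subgroup X,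
      (Subgroup.map S.subtype (groupResidual (pSupersolvableClass p) ↥S)).Normal) →
    IsPGroup p ↥(groupResidual (pSupersolvableClass p) X) := by
  induction n with
  | zero =>
    intro X _ _ hcard _ _
    have := Nat.card_pos (α := X)
    omega
  | succ n ih =>
    intro X _ _ hcard hsolv hyp
    by_cases hRbot : groupResidual (pSupersolvableClass p) X = ⊥
    · rw [hRbot]
      exact IsPGroup.of_card (n := 0) (by simp [Subgroup.card_bot])
    · haveI hRn : (groupResidual (pSupersolvableClass p) X).Normal := groupResidual_normal
      have key : ∀ (N : Subgroup X) (hNn : N.Normal), N ≠ ⊥ →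
          (letI := hNn; IsPGroup p ↥(groupResidual (pSupersolvableClass p) (X ⧸ N))) ∧
          (∀ x ∈ groupResidual (pSupersolvableClass p) X, ∃ k : ℕ, x ^ p ^ k ∈ N) := by
        intro N hNn hNbot
        haveI := hNn
        haveI : Finite (X ⧸ N) := Quotient.finite _
        have hlt : Nat.card (X ⧸ N) < Nat.card X := by
          rw [Subgroup.card_eq_card_quotient_mul_card_subgroup N]
          have h2 : 1 < Nat.card ↥N := (Subgroup.one_lt_card_iff_ne_bot N).mpr hNbot
          have h3 : 0 < Nat.card (X ⧸ N) := Nat.card_pos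
          exact (Nat.lt_mul_iff_one_lt_right h3).mpr h2
        have hcard' : Nat.card (X ⧸ N) ≤ n := by omega
        have hsolv' := isPSolvable_of_surjective hp (QuotientGroup.mk' N)
          (QuotientGroup.mk'_surjective N) hsolv
        have hyp' := hyp_quotient hp hsolv hyp N
        have hPG := ih (X ⧸ N) hcard' hsolv' hyp'
        refine ⟨hPG, fun x hx => ?_⟩
        have hmem : (QuotientGroup.mk' N) x ∈ groupResidual (pSupersolvableClass p) (X ⧸ N) :=
          residual_map_le hp (QuotientGroup.mk' N) (QuotientGroup.mk'_surjective N) ⟨x, hx, rfl⟩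
        obtain ⟨k, hk⟩ := hPG ⟨_, hmem⟩
        refine ⟨k, ?_⟩
        have hk' : ((QuotientGroup.mk' N) x) ^ p ^ k = 1 := by
          have h5 := congrArg (Subtype.val) hk
          simpa using h5
        have h6 : (QuotientGroup.mk' N) (x ^ p ^ k) = 1 := by
          rw [map_pow]; exact hk'
        exact (QuotientGroup.eq_one_iff _).mp h6
      obtain ⟨N, hNn, hNbot, hNleR, hNmin⟩ := exists_minimal_normal hRn hRbot
      rcases minimal_normal_card hp hsolv hNn hNbot hNmin with ⟨k, hcardN⟩ | hp'N
      · intro x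
        obtain ⟨a, ha⟩ := (key N hNn hNbot).2 x x.2
        refine ⟨a + k, ?_⟩
        have h1 : ((x : X) ^ p ^ a) ^ p ^ k = 1 := by
          have h2 : (⟨(x : X) ^ p ^ a, ha⟩ : ↥N) ^ p ^ k = 1 := by
            rw [← hcardN]
            exact pow_card_eq_one'
          have h3 := congrArg (Subtype.val) h2
          simpa using h3
        apply subtype_pow_eq_one
        rw [pow_add, pow_mul]
        exact h1
      · by_cases huniq : ∀ L : Subgroup X, L.Normal → L ≠ ⊥ → N ≤ L
        · exact (final_case hp hsolv hyp hNn hNbot hp'N huniq hNleR hRbot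
            (key N hNn hNbot).1).elim
        · push_neg at huniq
          obtain ⟨L, hLn, hLbot, hNL⟩ := huniq
          have hNLbot : N ⊓ L = ⊥ := by
            by_contra hh
            apply hNL
            have h4 := hNmin (N ⊓ L) (inf_normal hNn hLn) hh inf_le_left
            calc N = N ⊓ L := h4.symm
              _ ≤ L := inf_le_right
          intro x
          obtain ⟨a, ha⟩ := (key N hNn hNbot).2 x x.2
          obtain ⟨b, hb⟩ := (key L hLn hLbot).2 x x.2
          refine ⟨a + b, ?_⟩
          have h1 : (x : X) ^ p ^ (a + b) ∈ N ⊓ L := by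
            constructor
            · rw [pow_add, pow_mul]
              exact pow_mem ha _
            · rw [pow_add, Nat.mul_comm, pow_mul]
              exact pow_mem hb _
          rw [hNLbot] at h1
          exact subtype_pow_eq_one x _ h1

end Main

end StSix

/-- Let `G` be a finite `p`-solvable group.  Then the `𝒰_p`-residual of
`N_{𝒰_p}(G)` is a `p`-group. -/
theorem residual_of_norm_isPGroup
    {G : Type u} [Group G] [Finite G] {p : ℕ} (hp : p.Prime)
    (hG : IsPSolvableGrp p G) :
    IsPGroup p
      ↥(residualIn (pSupersolvableClass p) (grpNorm (pSupersolvableClass p) G)) := by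
  classical
  set D := grpNorm (pSupersolvableClass p) G with hD
  have hDsolv : IsPSolvableGrp p ↥D := StSix.isPSolvable_subgroup hp hG D
  have hyp : ∀ S : Subgroup ↥D, (Subgroup.map S.subtype
      (groupResidual (pSupersolvableClass p) ↥S)).Normal := by
    intro S
    set T := Subgroup.map D.subtype S with hT
    have hle : D ≤ Subgroup.normalizer (residualIn (pSupersolvableClass p) T : Set G) := by
      rw [hD]
      exact le_trans (iInf_le _ T) (iInf_le _ le_top)
    have hψres : residualIn (pSupersolvableClass p) T
        = Subgroup.map D.subtype
            (Subgroup.map S.subtype (groupResidual (pSupersolvableClass p) ↥S)) := by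
      have hSsolv : IsPSolvableGrp p ↥S := StSix.isPSolvable_subgroup hp hDsolv S
      have hψ : Subgroup.map
            (Subgroup.equivMapOfInjective S D.subtype (Subgroup.subtype_injective D)).toMonoidHom
            (groupResidual (pSupersolvableClass p) ↥S)
          = groupResidual (pSupersolvableClass p) ↥T :=
        StSix.residual_map_eq hp hSsolv _
          (Subgroup.equivMapOfInjective S D.subtype (Subgroup.subtype_injective D)).surjective
      show Subgroup.map T.subtype (groupResidual (pSupersolvableClass p) ↥T) = _
      rw [← hψ, Subgroup.map_map]
      have hcomp : T.subtype.comp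
          (Subgroup.equivMapOfInjective S D.subtype (Subgroup.subtype_injective D)).toMonoidHom
          = D.subtype.comp S.subtype :=
        MonoidHom.ext fun x => rfl
      rw [hcomp, ← Subgroup.map_map]
    set W := Subgroup.map S.subtype (groupResidual (pSupersolvableClass p) ↥S) with hW
    constructor
    intro w hw d
    have hd : (d : G) ∈ Subgroup.normalizer (Subgroup.map D.subtype W : Set G) := by
      rw [← hψres]
      exact hle d.2
    rw [Subgroup.mem_normalizer_iff] at hd
    have hw' : (w : G) ∈ Subgroup.map D.subtype W := ⟨w, hw, rfl⟩
    obtain ⟨w', hw'2, hw'eq⟩ := (hd (w : G)).mp hw'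
    have h13 : w' = d * w * d⁻¹ := by
      apply Subtype.ext
      have h14 : (w' : G) = (d : G) * (w : G) * (d : G)⁻¹ := hw'eq
      rw [h14]
      push_cast
      rfl
    rwa [← h13]
  have hPG := StSix.lemmaA hp (Nat.card ↥D) ↥D le_rfl hDsolv hyp
  intro x
  obtain ⟨y, hy, hyx⟩ := Subgroup.mem_map.mp x.2
  obtain ⟨k, hk⟩ := hPG ⟨y, hy⟩
  refine ⟨k, ?_⟩
  apply Subtype.ext
  have h1 : y ^ p ^ k = (1 : ↥D) := by
    have h0 := congrArg Subtype.val hk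
    simpa using h0
  have h2 : (y : G) ^ p ^ k = 1 := by
    have h0 := congrArg Subtype.val h1
    simpa using h0
  rw [SubmonoidClass.coe_pow]
  have h3 : (x : G) = (y : G) := hyx.symm
  rw [h3]
  simpa using h2
end
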